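/- Let ℛ and 𝒮 be linear growing TRSs over 𝓕 and let 𝒟'(ℛ,𝒮) be the powerset-pair automaton built from 𝒞'_{RS_{𝒮°}}(ℛ). For every s ∈ 𝒯(𝓕): s ∈ L(𝒟'(ℛ,𝒮)) if and only if s is not root-stable with respect to 𝒮 and s[(s|_p)°]_p ∈ (→_ℛ*)[RS_{𝒮°}] for every redex position p of s. -/

import Mathlib

set_option maxHeartbeats 1000000

/-! ## Terms over a signature -/

/-- Terms over a signature given by a type `F` of function symbols together with
an arity function `ar`; variables are natural numbers. -/
inductive Term (F : Type) (ar : F → ℕ) : Type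
  | var : ℕ → Term F ar
  | app : (f : F) → (Fin (ar f) → Term F ar) → Term F ar

namespace Term

variable {F : Type} {ar : F → ℕ}

/-- The (finite) set of variables of a term. -/
def vars : Term F ar → Finset ℕ
  | var n => {n}
  | app _ ts => Finset.univ.biUnion fun i => (ts i).vars

/-- A term is ground if it contains no variables. -/
def Ground (t : Term F ar) : Prop := t.vars = ∅

/-- The number of occurrences of the variable `n` in a term. -/
def count (n : ℕ) : Term F ar → ℕ
  | var m => if m = n then 1 else 0
  | app _ ts => ∑ i, (ts i).count n

/-- A term is linear if no variable occurs twice in it. -/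
def Linear (t : Term F ar) : Prop := ∀ n, t.count n ≤ 1

/-- Applying a substitution to a term. -/
def subst (σ : ℕ → Term F ar) : Term F ar → Term F ar
  | var n => σ n
  | app f ts => app f fun i => (ts i).subst σ

/-- The subterm at a position (a list of argument indices), if the position is valid. -/
def subtermAt : Term F ar → List ℕ → Option (Term F ar)
  | t, [] => some t
  | var _, _ :: _ => none
  | app f ts, i :: p => if h : i < ar f then (ts ⟨i, h⟩).subtermAt p else none

/-- Replacing the subterm at a position, if the position is valid. -/
def replaceAt : Term F ar → List ℕ → Term F ar → Option (Term F ar)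
  | _, [], u => some u
  | var _, _ :: _, _ => none
  | app f ts, i :: p, u =>
      if h : i < ar f then
        ((ts ⟨i, h⟩).replaceAt p u).map fun s => app f (Function.update ts ⟨i, h⟩ s)
      else none

/-- `s.IsSubtermOf t` : `s` is a subterm of `t`. -/
def IsSubtermOf (s t : Term F ar) : Prop := ∃ p, t.subtermAt p = some s

/-- Relabelling of function symbols along an arity-preserving map of signatures. -/
def relabel {G : Type} {arG : G → ℕ} (φ : F → G) (h : ∀ f, arG (φ f) = ar f) :
    Term F ar → Term G arG
  | var n => var n
  | app f ts => app (φ f) fun i => (ts (Fin.cast (h f) i)).relabel φ h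

end Term

/-! ## Rewriting -/

/-- One-step rewriting with a set of rewrite rules: there are a position `p` of `s`,
a rule `(l, r)` and a substitution `σ` with `s|_p = lσ` and `t = s[rσ]_p`. -/
def Rewrites {F : Type} {ar : F → ℕ} (R : Set (Term F ar × Term F ar))
    (s t : Term F ar) : Prop :=
  ∃ (p : List ℕ) (l r : Term F ar) (σ : ℕ → Term F ar),
    (l, r) ∈ R ∧ s.subtermAt p = some (l.subst σ) ∧ s.replaceAt p (r.subst σ) = some t

/-- Many-step rewriting (reflexive–transitive closure). -/
abbrev RewritesStar {F : Type} {ar : F → ℕ} (R : Set (Term F ar × Term F ar)) :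
    Term F ar → Term F ar → Prop :=
  Relation.ReflTransGen (Rewrites R)

/-- A term rewriting system: a finite set of rules whose left-hand sides are not variables. -/
structure TRS (F : Type) (ar : F → ℕ) where
  rules : Set (Term F ar × Term F ar)
  finite : rules.Finite
  lhs_not_var : ∀ lr ∈ rules, ∀ n, lr.1 ≠ Term.var n

namespace TRS

variable {F : Type} {ar : F → ℕ}

def LeftLinear (R : TRS F ar) : Prop := ∀ lr ∈ R.rules, lr.1.Linear

def RightLinear (R : TRS F ar) : Prop := ∀ lr ∈ R.rules, lr.2.Linear

/-- A TRS is linear if all left- and right-hand sides are linear terms. -/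
def IsLinear (R : TRS F ar) : Prop := R.LeftLinear ∧ R.RightLinear

/-- A TRS is growing if every variable occurring both in the left- and the right-hand
side of a rule occurs at depth 1 in the left-hand side. -/
def Growing (R : TRS F ar) : Prop :=
  ∀ lr ∈ R.rules, ∀ n ∈ lr.1.vars, n ∈ lr.2.vars →
    ∀ (f : F) (ts : Fin (ar f) → Term F ar), lr.1 = Term.app f ts →
      ∀ i, n ∈ (ts i).vars → ts i = Term.var n

/-- A redex is an instance of a left-hand side. -/
def IsRedex (R : TRS F ar) (s : Term F ar) : Prop :=
  ∃ lr ∈ R.rules, ∃ σ : ℕ → Term F ar, s = lr.1.subst σ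

/-- `p` is a redex position of `s`. -/
def RedexPos (R : TRS F ar) (s : Term F ar) (p : List ℕ) : Prop :=
  ∃ u, s.subtermAt p = some u ∧ R.IsRedex u

def Reducible (R : TRS F ar) (s : Term F ar) : Prop := ∃ p, R.RedexPos s p

/-- A term is root-stable if it cannot be rewritten to a redex. -/
def RootStable (R : TRS F ar) (s : Term F ar) : Prop :=
  ¬ ∃ t, RewritesStar R.rules s t ∧ R.IsRedex t

/-- Ground normal forms. -/
def NFset (R : TRS F ar) : Set (Term F ar) := { t | t.Ground ∧ ¬ R.Reducible t }

/-- Ground redexes. -/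
def RedexSet (R : TRS F ar) : Set (Term F ar) := { t | t.Ground ∧ R.IsRedex t }

/-- Root-stable ground terms. -/
def RSset (R : TRS F ar) : Set (Term F ar) := { t | t.Ground ∧ R.RootStable t }

/-- Relabelling a TRS along an arity-preserving map of signatures. -/
def relabel {G : Type} {arG : G → ℕ} (R : TRS F ar) (φ : F → G)
    (h : ∀ f, arG (φ f) = ar f) : TRS G arG where
  rules := (fun lr => (lr.1.relabel φ h, lr.2.relabel φ h)) '' R.rules
  finite := R.finite.image _
  lhs_not_var := by
    rintro lr ⟨lr0, h0, rfl⟩ n hn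
    dsimp only at hn
    cases h1 : lr0.1 with
    | var m => exact absurd h1 (R.lhs_not_var lr0 h0 m)
    | app f ts =>
        rw [h1] at hn
        simp only [Term.relabel] at hn
        exact nomatch hn

end TRS

/-! ## Tree automata -/

/-- A transition rule `f(q₁,…,qₙ) → q` of a bottom-up tree automaton. -/
abbrev TARule (F : Type) (ar : F → ℕ) (Q : Type) : Type :=
  (f : F) × ((Fin (ar f) → Q) × Q)

/-- A (finite bottom-up) tree automaton without ε-transitions. -/
structure TreeAutomaton (F : Type) (ar : F → ℕ) (Q : Type) where
  trans : Set (TARule F ar Q)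
  final : Set Q

/-- `Reaches Δ t q` : the ground term `t` rewrites to the state `q` using the
transition rules `Δ`. -/
inductive Reaches {F : Type} {ar : F → ℕ} {Q : Type} (Δ : Set (TARule F ar Q)) :
    Term F ar → Q → Prop
  | app {f : F} {ts : Fin (ar f) → Term F ar} {qs : Fin (ar f) → Q} {q : Q} :
      (∀ i, Reaches Δ (ts i) (qs i)) → (⟨f, qs, q⟩ : TARule F ar Q) ∈ Δ →
      Reaches Δ (Term.app f ts) q

/-- `ReachesT Δ θ t q` : the term `t`, whose variables are interpreted as the states
given by `θ`, rewrites to the state `q` using the transition rules `Δ`. -/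
inductive ReachesT {F : Type} {ar : F → ℕ} {Q : Type} (Δ : Set (TARule F ar Q))
    (θ : ℕ → Q) : Term F ar → Q → Prop
  | var (n : ℕ) : ReachesT Δ θ (Term.var n) (θ n)
  | app {f : F} {ts : Fin (ar f) → Term F ar} {qs : Fin (ar f) → Q} {q : Q} :
      (∀ i, ReachesT Δ θ (ts i) (qs i)) → (⟨f, qs, q⟩ : TARule F ar Q) ∈ Δ →
      ReachesT Δ θ (Term.app f ts) q

/-- The language of a tree automaton: all ground terms reaching a final state. -/
def Lang {F : Type} {ar : F → ℕ} {Q : Type} (A : TreeAutomaton F ar Q) :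
    Set (Term F ar) :=
  { t | t.Ground ∧ ∃ q ∈ A.final, Reaches A.trans t q }

/-- A set of ground terms is recognizable if it is the language of some finite
tree automaton. -/
def Recognizable {F : Type} {ar : F → ℕ} (T : Set (Term F ar)) : Prop :=
  ∃ (Q : Type) (_ : Fintype Q) (A : TreeAutomaton F ar Q), T = Lang A

/-- The set of states occurring in a set of transition rules. -/
def statesOf {F : Type} {ar : F → ℕ} {Q : Type} (Γ : Set (TARule F ar Q)) : Set Q :=
  { q | ∃ ρ ∈ Γ, ρ.2.2 = q ∨ ∃ i, ρ.2.1 i = q }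

/-! ## The automaton `ℬ(ℛ)` -/

/-- The canonical representative of the state `⟨t⟩` of `ℬ(ℛ)`: all variables are
identified with the single state `⟨x⟩`, represented by `var 0`. -/
def stPattern {F : Type} {ar : F → ℕ} : Term F ar → Term F ar
  | Term.var _ => Term.var 0
  | Term.app f ts => Term.app f ts

/-- `S_ℛ`: the set of all subterms of arguments of left-hand sides of `ℛ`. -/
def SR {F : Type} {ar : F → ℕ} (R : TRS F ar) : Set (Term F ar) :=
  { s | ∃ lr ∈ R.rules, ∃ (f : F) (ts : Fin (ar f) → Term F ar),
        lr.1 = Term.app f ts ∧ ∃ i, s.IsSubtermOf (ts i) }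

/-- The representatives of the states of `ℬ(ℛ)`: the patterns of terms of `S_ℛ`,
together with `⟨x⟩`. -/
def BStateSet {F : Type} {ar : F → ℕ} (R : TRS F ar) : Set (Term F ar) :=
  stPattern '' SR R ∪ {Term.var 0}

/-- The matching rules of `ℬ(ℛ)` (with states encoded by `enc`):
`f(⟨t₁⟩,…,⟨tₙ⟩) → ⟨t⟩` for every `t = f(t₁,…,tₙ) ∈ S_ℛ`. -/
def BMatch {F : Type} {ar : F → ℕ} {Q : Type} (R : TRS F ar) (enc : Term F ar → Q) :
    Set (TARule F ar Q) :=
  { ρ | ∃ (f : F) (ts : Fin (ar f) → Term F ar), Term.app f ts ∈ SR R ∧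
        ρ = ⟨f, fun i => enc (stPattern (ts i)), enc (Term.app f ts)⟩ }

/-- The propagation rules `f(⟨x⟩,…,⟨x⟩) → ⟨x⟩` for every function symbol `f`. -/
def BProp {F : Type} {ar : F → ℕ} {Q : Type} (enc : Term F ar → Q) :
    Set (TARule F ar Q) :=
  { ρ | ∃ f : F, ρ = ⟨f, fun _ => enc (Term.var 0), enc (Term.var 0)⟩ }

/-- The transition rules of the automaton `ℬ(ℛ)`. -/
def BTrans {F : Type} {ar : F → ℕ} {Q : Type} (R : TRS F ar) (enc : Term F ar → Q) :
    Set (TARule F ar Q) :=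
  BMatch R enc ∪ BProp enc

/-- `Σ(t)`: the set of ground instances of the term `t`. -/
def GInst {F : Type} {ar : F → ℕ} (t : Term F ar) : Set (Term F ar) :=
  { s | s.Ground ∧ ∃ σ, s = t.subst σ }

/-! ## Saturation -/

/-- The state `qᵢ` associated to the argument `lᵢ` of a left-hand side in the
saturation rule: `lᵢθ` if `lᵢ` is a variable occurring in `r` (whose variable set
is `rv`), and `⟨lᵢ⟩` otherwise. -/
def satArg {F : Type} {ar : F → ℕ} {Q : Type} (enc : Term F ar → Q) (θ : ℕ → Q)
    (rv : Finset ℕ) : Term F ar → Q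
  | Term.var n => if n ∈ rv then θ n else enc (Term.var 0)
  | Term.app f ts => enc (Term.app f ts)

/-- One step of the saturation process: add all transition rules `f(q₁,…,qₙ) → q`
obtained from a rewrite rule `f(l₁,…,lₙ) → r` and a state substitution `θ`
(with values among the states `Qc` of the automaton) such that `rθ →_Γ* q`. -/
def satStep {F : Type} {ar : F → ℕ} {Q : Type} (R : TRS F ar) (enc : Term F ar → Q)
    (Qc : Set Q) (Γ : Set (TARule F ar Q)) : Set (TARule F ar Q) :=
  Γ ∪ { ρ | ∃ (f : F) (ls : Fin (ar f) → Term F ar) (r : Term F ar) (θ : ℕ → Q) (q : Q),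
        (Term.app f ls, r) ∈ R.rules ∧ (∀ n ∈ r.vars, θ n ∈ Qc) ∧ ReachesT Γ θ r q ∧
        ρ = ⟨f, fun i => satArg enc θ r.vars (ls i), q⟩ }

/-- The saturated set of transition rules: the closure of `Γ0` under the saturation
inference rule. -/
def satGamma {F : Type} {ar : F → ℕ} {Q : Type} (R : TRS F ar) (enc : Term F ar → Q)
    (Qc : Set Q) (Γ0 : Set (TARule F ar Q)) : Set (TARule F ar Q) :=
  ⋃ n, (satStep R enc Qc)^[n] Γ0

/-! ## The automaton `𝒞_T(ℛ)` and its extension `𝒞'_T(ℛ)` -/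

/-- The data of the construction of the automaton `𝒞_T(ℛ)`: an automaton `𝒜_T`
recognizing `T` with all states accessible and state set `QA`, together with an
encoding `enc` of the states `⟨t⟩` of `ℬ(ℛ)` into the common state type `Q`, such
that every state common to `𝒜_T` and `ℬ(ℛ)` accepts the same set of terms in both
automata. -/
structure CSetup {G : Type} [Fintype G] {arG : G → ℕ} (Q : Type) [Fintype Q]
    (Rg : TRS G arG) (T : Set (Term G arG)) where
  enc : Term G arG → Q
  A : TreeAutomaton G arG Q
  QA : Set Q
  henc : Set.InjOn enc (BStateSet Rg)
  hAstates : ∀ ρ ∈ A.trans, ρ.2.2 ∈ QA ∧ ∀ i, ρ.2.1 i ∈ QA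
  hfinal : A.final ⊆ QA
  hacc : ∀ q ∈ QA, ∃ s : Term G arG, s.Ground ∧ Reaches A.trans s q
  hground : ∃ s : Term G arG, s.Ground
  hshared : ∀ q ∈ QA ∩ enc '' BStateSet Rg, ∀ s : Term G arG,
      Reaches A.trans s q ↔ Reaches (BTrans Rg enc) s q
  hT : T = Lang A

namespace CSetup

variable {G : Type} [Fintype G] {arG : G → ℕ} {Q : Type} [Fintype Q]
  {Rg : TRS G arG} {T : Set (Term G arG)}

/-- The set of states of the automaton `𝒞_T(ℛ)`. -/
def Qstates (C : CSetup Q Rg T) : Set Q := C.QA ∪ C.enc '' BStateSet Rg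

/-- The transition rules of `𝒞_T(ℛ)` before saturation: the union of `𝒜_T` and `ℬ(ℛ)`. -/
def Γ0 (C : CSetup Q Rg T) : Set (TARule G arG Q) := C.A.trans ∪ BTrans Rg C.enc

/-- The transition rules of `𝒞_T(ℛ)` after saturation. -/
def Γsat (C : CSetup Q Rg T) : Set (TARule G arG Q) :=
  satGamma Rg C.enc C.Qstates C.Γ0

end CSetup

/-- The redex rules `f(⟪l₁⟫,…,⟪lₙ⟫) → q_r` for every left-hand side `f(l₁,…,lₙ)`. -/
def RedexRules {F : Type} {ar : F → ℕ} {Q : Type} (R : TRS F ar)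
    (enc2 : Term F ar → Q) (qr : Q) : Set (TARule F ar Q) :=
  { ρ | ∃ (f : F) (ls : Fin (ar f) → Term F ar) (r : Term F ar),
        (Term.app f ls, r) ∈ R.rules ∧
        ρ = ⟨f, fun i => enc2 (stPattern (ls i)), qr⟩ }

/-- The rules `f(⟨x⟩,…,q_r,…,⟨x⟩) → q_r`. -/
def QrProp {F : Type} {ar : F → ℕ} {Q : Type} (enc : Term F ar → Q) (qr : Q) :
    Set (TARule F ar Q) :=
  { ρ | ∃ (f : F) (j : Fin (ar f)),
        ρ = ⟨f, fun i => if i = j then qr else enc (Term.var 0), qr⟩ }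

/-- The data of the construction of the automaton `𝒞'_T(ℛ)`: `𝒞_T(ℛ)` extended with
a fresh copy `⟪t⟫` (encoded by `enc2`, with `⟪x⟫ = ⟨x⟩`) of the states of `ℬ(ℛ)` and
a fresh state `q_r`. -/
structure CpSetup {G : Type} [Fintype G] {arG : G → ℕ} (Q : Type) [Fintype Q]
    (Rg : TRS G arG) (T : Set (Term G arG)) extends CSetup Q Rg T where
  enc2 : Term G arG → Q
  qr : Q
  henc2 : Set.InjOn enc2 (BStateSet Rg)
  hx : enc2 (Term.var 0) = enc (Term.var 0)
  hfresh : (enc2 '' (BStateSet Rg \ {Term.var 0}) ∪ {qr}) ∩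
              (QA ∪ enc '' BStateSet Rg) = ∅
  hqr : qr ∉ enc2 '' (BStateSet Rg \ {Term.var 0})

namespace CpSetup

variable {G : Type} [Fintype G] {arG : G → ℕ} {Q : Type} [Fintype Q]
  {Rg : TRS G arG} {T : Set (Term G arG)}

/-- The transition rules `Γ'` of the automaton `𝒞'_T(ℛ)`. -/
def Γ' (C : CpSetup Q Rg T) : Set (TARule G arG Q) :=
  C.toCSetup.Γsat ∪ BMatch Rg C.enc2 ∪ RedexRules Rg C.enc2 C.qr ∪ QrProp C.enc C.qr

end CpSetup

/-! ## The signature `𝓖 = 𝓕 ∪ {•}` -/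

/-- The arity function of the extended signature `𝓕 ∪ {•}` (with `•` the fresh
constant `none`). -/
def arB {F : Type} (ar : F → ℕ) : Option F → ℕ
  | none => 0
  | some f => ar f

/-- The term `•`. -/
def bulletTm {F : Type} {ar : F → ℕ} : Term (Option F) (arB ar) :=
  Term.app none Fin.elim0

/-- The embedding of `𝒯(𝓕)`-terms into terms over `𝓕 ∪ {•}`. -/
def liftB {F : Type} {ar : F → ℕ} : Term F ar → Term (Option F) (arB ar) :=
  Term.relabel some (fun _ => rfl)

/-- A TRS over `𝓕` viewed as a TRS over `𝓕 ∪ {•}`. -/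
def TRS.liftB {F : Type} {ar : F → ℕ} (R : TRS F ar) : TRS (Option F) (arB ar) :=
  R.relabel some (fun _ => rfl)

/-- The TRS `ℛ• = ℛ ∪ {• → •}` over the signature `𝓕 ∪ {•}`. -/
def TRS.bullet {F : Type} {ar : F → ℕ} (R : TRS F ar) : TRS (Option F) (arB ar) where
  rules := R.liftB.rules ∪ {(bulletTm, bulletTm)}
  finite := R.liftB.finite.union (Set.finite_singleton _)
  lhs_not_var := by
    rintro lr (h | h) n hn
    · exact R.liftB.lhs_not_var lr h n hn
    · rw [Set.mem_singleton_iff] at h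
      rw [h] at hn
      simp [bulletTm] at hn

/-! ## The automaton `𝒟(ℛ)` -/

/-- For a symbol `g` and sets of states `Ss` for the arguments, the set
`g(S₁,…,Sₙ)↓` of states reachable from `g` applied to states chosen from the `Ssᵢ`. -/
def oneStep {G : Type} {arG : G → ℕ} {Q : Type} (Γ : Set (TARule G arG Q)) (g : G)
    (Ss : Fin (arG g) → Set Q) : Set Q :=
  { q | ∃ qs : Fin (arG g) → Q, (∀ i, qs i ∈ Ss i) ∧ (⟨g, qs, q⟩ : TARule G arG Q) ∈ Γ }

/-- `t↓` for a ground term `t`: the set of states reachable from `t`. -/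
def dn {G : Type} {arG : G → ℕ} {Q : Type} (Γ : Set (TARule G arG Q))
    (t : Term G arG) : Set Q :=
  { q | Reaches Γ t q }

/-- There is a rewrite rule with left-hand side `g(l₁,…,lₙ)` such that
`⟪lᵢ⟫ ∈ Ssᵢ` for all `i`. -/
def LhsMatch {G : Type} {arG : G → ℕ} {Q : Type} (Rg : TRS G arG)
    (enc2 : Term G arG → Q) (g : G) (Ss : Fin (arG g) → Set Q) : Prop :=
  ∃ (ls : Fin (arG g) → Term G arG) (r : Term G arG),
    (Term.app g ls, r) ∈ Rg.rules ∧ ∀ i, enc2 (stPattern (ls i)) ∈ Ss i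

/-- The transition rules of the automaton `𝒟(ℛ)` over `𝓕`, built from the transition
rules `Γ'` of `𝒞'_{NF}(ℛ)` over `𝓕 ∪ {•}`. -/
def DTrans {F : Type} {ar : F → ℕ} {Q : Type} (Rb : TRS (Option F) (arB ar))
    (Γ' : Set (TARule (Option F) (arB ar) Q))
    (enc enc2 : Term (Option F) (arB ar) → Q) :
    Set (TARule F ar (Set Q × Set Q)) :=
  { ρ | ∃ (f : F) (SP : Fin (ar f) → Set Q × Set Q) (P1 P2 : Set Q),
      P1 ⊆ (⋃ i : Fin (ar f), oneStep Γ' (some f)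
              (fun (j : Fin (ar f)) => if j = i then (SP j).2 else (SP j).1)) ∧
      (∀ (i : Fin (ar f)), ∀ q ∈ (SP i).2,
        (P1 ∩ oneStep Γ' (some f) (fun (j : Fin (ar f)) => if j = i then {q} else (SP j).1)).Nonempty) ∧
      ((LhsMatch Rb enc2 (some f) (fun i => (SP i).1) ∧ P2 = {enc (Term.var 0)}) ∨
       (¬ LhsMatch Rb enc2 (some f) (fun i => (SP i).1) ∧ P2 = (∅ : Set Q))) ∧
      ρ = ⟨f, SP, (oneStep Γ' (some f) (fun i => (SP i).1), P1 ∪ P2)⟩ }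

/-- The automaton `𝒟(ℛ)`: final states are the pairs `[S,P]` with `q_r ∈ S` and
`P ⊆ Q_f`. -/
def DAutomaton {F : Type} {ar : F → ℕ} {Q : Type} (Rb : TRS (Option F) (arB ar))
    (Γ' : Set (TARule (Option F) (arB ar) Q))
    (enc enc2 : Term (Option F) (arB ar) → Q) (qr : Q) (Qf : Set Q) :
    TreeAutomaton F ar (Set Q × Set Q) where
  trans := DTrans Rb Γ' enc enc2
  final := { SP | qr ∈ SP.1 ∧ SP.2 ⊆ Qf }

/-! ## Growing approximations -/

/-- `VarRepl t t'` : `t'` is obtained from `t` by replacing occurrences of variables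
by (possibly other) variables. -/
inductive VarRepl {F : Type} {ar : F → ℕ} : Term F ar → Term F ar → Prop
  | var (n m : ℕ) : VarRepl (Term.var n) (Term.var m)
  | app (f : F) (ts ts' : Fin (ar f) → Term F ar) :
      (∀ i, VarRepl (ts i) (ts' i)) → VarRepl (Term.app f ts) (Term.app f ts')

/-- `Rg` is a growing approximation of `R`: a right-linear growing TRS obtained from
`R` by replacing, in each right-hand side, occurrences of variables by variables not
occurring in the corresponding left-hand side. -/
def IsGrowingApprox {F : Type} {ar : F → ℕ} (R Rg : TRS F ar) : Prop :=
  Rg.RightLinear ∧ Rg.Growing ∧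
  (∀ lr ∈ Rg.rules, ∃ lr' ∈ R.rules, lr.1 = lr'.1 ∧ VarRepl lr'.2 lr.2 ∧
      ∀ n ∈ lr.2.vars, n ∉ lr.1.vars) ∧
  (∀ lr ∈ R.rules, ∃ lr' ∈ Rg.rules, lr.1 = lr'.1 ∧ VarRepl lr.2 lr'.2 ∧
      ∀ n ∈ lr'.2.vars, n ∉ lr'.1.vars)

/-! ## The signature `𝓖 = 𝓕 ∪ {f° : f ∈ 𝓕}` -/

/-- The arity function of the signature `𝓕 ∪ {f° : f ∈ 𝓕}` (`inl f` is `f`,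
`inr f` is `f°`). -/
def arC {F : Type} (ar : F → ℕ) : F ⊕ F → ℕ
  | Sum.inl f => ar f
  | Sum.inr f => ar f

/-- The embedding of `𝒯(𝓕)`-terms into terms over `𝓕 ∪ {f° : f ∈ 𝓕}`. -/
def liftC {F : Type} {ar : F → ℕ} : Term F ar → Term (F ⊕ F) (arC ar) :=
  Term.relabel Sum.inl (fun _ => rfl)

/-- `t°`: mark the root symbol of `t`. -/
def circTm {F : Type} {ar : F → ℕ} : Term F ar → Term (F ⊕ F) (arC ar)
  | Term.var n => Term.var n
  | Term.app f ts => Term.app (Sum.inr f) fun i => liftC (ts i)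

/-- A TRS over `𝓕` viewed as a TRS over `𝓕 ∪ {f° : f ∈ 𝓕}`. -/
def TRS.liftC {F : Type} {ar : F → ℕ} (R : TRS F ar) : TRS (F ⊕ F) (arC ar) :=
  R.relabel Sum.inl (fun _ => rfl)

/-- The TRS `𝒮° = 𝒮 ∪ {l° → r | l → r ∈ 𝒮}` over the signature `𝓕 ∪ {f° : f ∈ 𝓕}`. -/
def TRS.circ {F : Type} {ar : F → ℕ} (S : TRS F ar) : TRS (F ⊕ F) (arC ar) where
  rules := S.liftC.rules ∪ (fun lr => (circTm lr.1, _root_.liftC lr.2)) '' S.rules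
  finite := S.liftC.finite.union (S.finite.image _)
  lhs_not_var := by
    rintro lr (h | ⟨lr0, h0, rfl⟩) n hn
    · exact S.liftC.lhs_not_var lr h n hn
    · dsimp only at hn
      cases h1 : lr0.1 with
      | var m => exact absurd h1 (S.lhs_not_var lr0 h0 m)
      | app f ts =>
          rw [h1] at hn
          simp only [circTm] at hn
          exact nomatch hn

/-- The transitions added to `ℬ(𝒮°)` to obtain `𝒜_{REDEX_{𝒮°}}`:
`f(⟨l₁⟩,…,⟨lₙ⟩) → q_f` and `f°(⟨l₁⟩,…,⟨lₙ⟩) → q_f` for each left-hand side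
`f(l₁,…,lₙ)` of a rule of `𝒮`. -/
def CircRedexRules {F : Type} {ar : F → ℕ} {Q : Type} (S : TRS F ar)
    (enc : Term (F ⊕ F) (arC ar) → Q) (qf : Q) : Set (TARule (F ⊕ F) (arC ar) Q) :=
  { ρ | ∃ (f : F) (ls : Fin (ar f) → Term F ar) (r : Term F ar),
      (Term.app f ls, r) ∈ S.rules ∧
      (ρ = ⟨Sum.inl f, fun i => enc (stPattern (liftC (ls i))), qf⟩ ∨
       ρ = ⟨Sum.inr f, fun i => enc (stPattern (liftC (ls i))), qf⟩) }

/-! ## The automaton `𝒟'(ℛ,𝒮)` -/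

/-- The data of the construction of `𝒞'_{RS_{𝒮°}}(ℛ)`: the saturated automaton
`𝒞_{RS_{𝒮°}}(ℛ)`, a fresh copy `⟪t⟫` (encoded by `enc2`, with `⟪x⟫ = ⟨x⟩`) of the
states of `ℬ(ℛ)`, and an automaton `𝒞_{REDEX_𝒮}(𝒮)` (transitions `Etrans`, final
states `Qf'`) recognizing the non-`𝒮`-root-stable ground terms of `𝒯(𝓕)`. -/
structure CrsSetup {F : Type} [Fintype F] {ar : F → ℕ} (Q : Type) [Fintype Q]
    (R S : TRS F ar) extends CSetup Q R.liftC (TRS.RSset S.circ) where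
  enc2 : Term (F ⊕ F) (arC ar) → Q
  henc2 : Set.InjOn enc2 (BStateSet R.liftC)
  hx : enc2 (Term.var 0) = enc (Term.var 0)
  hfresh2 : (enc2 '' (BStateSet R.liftC \ {Term.var 0})) ∩
              (QA ∪ enc '' BStateSet R.liftC) = ∅
  Etrans : Set (TARule (F ⊕ F) (arC ar) Q)
  Qf' : Set Q
  hQf' : Qf' ⊆ statesOf Etrans
  hEfresh : statesOf Etrans ∩
      (QA ∪ enc '' BStateSet R.liftC ∪ enc2 '' (BStateSet R.liftC \ {Term.var 0})) = ∅
  hE : ∀ t : Term (F ⊕ F) (arC ar),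
      (t.Ground ∧ ∃ q ∈ Qf', Reaches Etrans t q) ↔
      (∃ s : Term F ar, t = liftC s ∧ s.Ground ∧ ¬ S.RootStable s)

namespace CrsSetup

variable {F : Type} [Fintype F] {ar : F → ℕ} {Q : Type} [Fintype Q] {R S : TRS F ar}

/-- The transition rules `Γ'` of the automaton `𝒞'_{RS_{𝒮°}}(ℛ)`. -/
def Γ' (C : CrsSetup Q R S) : Set (TARule (F ⊕ F) (arC ar) Q) :=
  C.toCSetup.Γsat ∪ BMatch R.liftC C.enc2 ∪ C.Etrans

end CrsSetup

/-- The transition rules of the automaton `𝒟'(ℛ,𝒮)` over `𝓕`, built from the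
transition rules `Γ'` of `𝒞'_{RS_{𝒮°}}(ℛ)`. -/
def DTransRS {F : Type} {ar : F → ℕ} {Q : Type} (Rg : TRS (F ⊕ F) (arC ar))
    (Γ' : Set (TARule (F ⊕ F) (arC ar) Q)) (enc2 : Term (F ⊕ F) (arC ar) → Q) :
    Set (TARule F ar (Set Q × Set Q)) :=
  { ρ | ∃ (f : F) (SP : Fin (ar f) → Set Q × Set Q) (P1 P2 : Set Q),
      P1 ⊆ (⋃ i : Fin (ar f), oneStep Γ' (Sum.inl f)
              (fun (j : Fin (ar f)) => if j = i then (SP j).2 else (SP j).1)) ∧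
      (∀ (i : Fin (ar f)), ∀ q ∈ (SP i).2,
        (P1 ∩ oneStep Γ' (Sum.inl f) (fun (j : Fin (ar f)) => if j = i then {q} else (SP j).1)).Nonempty) ∧
      ((LhsMatch Rg enc2 (Sum.inl f) (fun i => (SP i).1) ∧ P2.Nonempty ∧
          P2 ⊆ oneStep Γ' (Sum.inr f) (fun i => (SP i).1)) ∨
       (¬ LhsMatch Rg enc2 (Sum.inl f) (fun i => (SP i).1) ∧ P2 = (∅ : Set Q))) ∧
      ρ = ⟨f, SP, (oneStep Γ' (Sum.inl f) (fun i => (SP i).1), P1 ∪ P2)⟩ }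

/-- The automaton `𝒟'(ℛ,𝒮)`: final states are the pairs `[S,P]` with
`S ∩ Q_f' ≠ ∅` and `P ⊆ Q_f`. -/
def DAutomatonRS {F : Type} {ar : F → ℕ} {Q : Type} (Rg : TRS (F ⊕ F) (arC ar))
    (Γ' : Set (TARule (F ⊕ F) (arC ar) Q)) (enc2 : Term (F ⊕ F) (arC ar) → Q)
    (Qf' Qf : Set Q) : TreeAutomaton F ar (Set Q × Set Q) where
  trans := DTransRS Rg Γ' enc2
  final := { SP | (SP.1 ∩ Qf').Nonempty ∧ SP.2 ⊆ Qf }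
attribute [reducible] arC


/-! ### Auxiliary development -/

section Aux

namespace Term

variable {F : Type} {ar : F → ℕ}

@[simp] lemma vars_var (n : ℕ) : (var (F := F) (ar := ar) n).vars = {n} := rfl

@[simp] lemma vars_app (f : F) (ts : Fin (ar f) → Term F ar) :
    (app f ts).vars = Finset.univ.biUnion fun i => (ts i).vars := rfl

lemma mem_vars_app {f : F} {ts : Fin (ar f) → Term F ar} {n : ℕ} :
    n ∈ (app f ts).vars ↔ ∃ i, n ∈ (ts i).vars := by
  simp [vars_app]

lemma ground_iff {t : Term F ar} : t.Ground ↔ ∀ n, n ∉ t.vars := by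
  simp [Ground, Finset.eq_empty_iff_forall_notMem]

lemma ground_app {f : F} {ts : Fin (ar f) → Term F ar} :
    (app f ts).Ground ↔ ∀ i, (ts i).Ground := by
  simp only [ground_iff, mem_vars_app]
  exact ⟨fun h i n hn => h n ⟨i, hn⟩, fun h n ⟨i, hn⟩ => h i n hn⟩

lemma not_ground_var (n : ℕ) : ¬ (var (F := F) (ar := ar) n).Ground := by
  simp [Ground, vars]

@[simp] lemma subst_var (σ : ℕ → Term F ar) (n : ℕ) : (var n).subst σ = σ n := rfl

@[simp] lemma subst_app (σ : ℕ → Term F ar) (f : F) (ts : Fin (ar f) → Term F ar) :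
    (app f ts).subst σ = app f fun i => (ts i).subst σ := rfl

lemma subst_congr {t : Term F ar} {σ σ' : ℕ → Term F ar}
    (h : ∀ n ∈ t.vars, σ n = σ' n) : t.subst σ = t.subst σ' := by
  induction t with
  | var n => exact h n (by simp)
  | app f ts ih =>
      simp only [subst_app]
      exact congrArg _ (funext fun i => ih i fun n hn => h n (mem_vars_app.2 ⟨i, hn⟩))

lemma ground_subst {t : Term F ar} {σ : ℕ → Term F ar}
    (h : ∀ n ∈ t.vars, (σ n).Ground) : (t.subst σ).Ground := by
  induction t with
  | var n => exact h n (by simp)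
  | app f ts ih =>
      rw [subst_app, ground_app]
      exact fun i => ih i fun n hn => h n (mem_vars_app.2 ⟨i, hn⟩)

lemma ground_subst_rev {t : Term F ar} {σ : ℕ → Term F ar}
    (h : (t.subst σ).Ground) : ∀ n ∈ t.vars, (σ n).Ground := by
  induction t with
  | var n => intro m hm; simp only [vars_var, Finset.mem_singleton] at hm; subst hm; exact h
  | app f ts ih =>
      intro n hn
      rcases mem_vars_app.1 hn with ⟨i, hi⟩
      rw [subst_app, ground_app] at h
      exact ih i (h i) n hi

lemma count_pos_iff_mem_vars {t : Term F ar} {n : ℕ} : 0 < t.count n ↔ n ∈ t.vars := by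
  induction t with
  | var m =>
      simp only [count, vars_var, Finset.mem_singleton]
      by_cases h : m = n
      · subst h; simp
      · simp only [if_neg h]
        exact ⟨fun hh => absurd hh (lt_irrefl 0), fun hh => absurd hh.symm h⟩
  | app f ts ih =>
      simp only [count, mem_vars_app]
      have : (0 < ∑ i, (ts i).count n) ↔ ∃ i, 0 < (ts i).count n := by
        rw [Nat.pos_iff_ne_zero, Ne, Finset.sum_eq_zero_iff]
        push_neg
        simp [Nat.pos_iff_ne_zero]
      rw [this]
      exact exists_congr fun i => ih i

lemma Linear.arg {f : F} {ts : Fin (ar f) → Term F ar}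
    (h : (app f ts).Linear) (i : Fin (ar f)) : (ts i).Linear := by
  intro n
  have h1 : ∑ j, (ts j).count n ≤ 1 := h n
  calc (ts i).count n ≤ ∑ j, (ts j).count n :=
        Finset.single_le_sum (f := fun j => (ts j).count n)
          (fun j _ => Nat.zero_le _) (Finset.mem_univ i)
    _ ≤ 1 := h1

lemma Linear.disjoint {f : F} {ts : Fin (ar f) → Term F ar}
    (h : (app f ts).Linear) {n : ℕ} {i j : Fin (ar f)}
    (hi : n ∈ (ts i).vars) (hj : n ∈ (ts j).vars) : i = j := by
  by_contra hij
  have hin := count_pos_iff_mem_vars.2 hi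
  have hjn := count_pos_iff_mem_vars.2 hj
  have hle : (ts i).count n + (ts j).count n ≤ ∑ k, (ts k).count n :=
    calc (ts i).count n + (ts j).count n
        = ∑ k ∈ ({i, j} : Finset (Fin (ar f))), (ts k).count n :=
          (Finset.sum_pair (f := fun k => (ts k).count n) hij).symm
      _ ≤ ∑ k, (ts k).count n := Finset.sum_le_sum_of_subset (Finset.subset_univ _)
  have h1 : ∑ k, (ts k).count n ≤ 1 := h n
  omega

lemma subtermAt_nil (t : Term F ar) : t.subtermAt [] = some t := by
  cases t <;> rfl

lemma subterm_ground {t u : Term F ar} {p : List ℕ} (ht : t.Ground)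
    (h : t.subtermAt p = some u) : u.Ground := by
  induction p generalizing t with
  | nil => rw [subtermAt_nil] at h; cases h; exact ht
  | cons i p ih =>
      cases t with
      | var n => exact nomatch h
      | app f ts =>
          simp only [subtermAt] at h
          split at h
          · exact ih (ground_app.1 ht _) h
          · exact nomatch h

lemma count_subterm_le {t u : Term F ar} {p : List ℕ} (h : t.subtermAt p = some u)
    (n : ℕ) : u.count n ≤ t.count n := by
  induction p generalizing t with
  | nil => rw [subtermAt_nil] at h; cases h; exact le_rfl
  | cons i p ih =>
      cases t with
      | var m => exact nomatch h
      | app f ts =>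
          simp only [subtermAt] at h
          split at h
          · refine le_trans (ih h) ?_
            show _ ≤ ∑ j, (ts j).count n
            exact Finset.single_le_sum (f := fun j => (ts j).count n)
              (fun j _ => Nat.zero_le _) (Finset.mem_univ _)
          · exact nomatch h

lemma subterm_linear {t u : Term F ar} {p : List ℕ} (ht : t.Linear)
    (h : t.subtermAt p = some u) : u.Linear :=
  fun n => le_trans (count_subterm_le h n) (ht n)

lemma subtermAt_append (t : Term F ar) (p q : List ℕ) :
    t.subtermAt (p ++ q) = (t.subtermAt p).bind (·.subtermAt q) := by
  induction p generalizing t with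
  | nil => simp [subtermAt_nil]
  | cons i p ih =>
      cases t with
      | var n => rfl
      | app f ts =>
          simp only [List.cons_append, subtermAt]
          split
          · exact ih _
          · rfl

lemma replaceAt_nil (t u : Term F ar) : t.replaceAt [] u = some u := by
  cases t <;> rfl

lemma replaceAt_exists {t u : Term F ar} {p : List ℕ} (h : t.subtermAt p = some u)
    (w : Term F ar) : ∃ v, t.replaceAt p w = some v := by
  induction p generalizing t with
  | nil => exact ⟨w, replaceAt_nil t w⟩
  | cons i p ih =>
      cases t with
      | var n => exact nomatch h
      | app f ts =>
          simp only [subtermAt] at h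
          simp only [replaceAt]
          split at h
          case isTrue hlt =>
            rcases ih h with ⟨v, hv⟩
            exact ⟨_, by rw [dif_pos hlt, hv]; rfl⟩
          case isFalse hlt => exact nomatch h

lemma replaceAt_ground {t w v : Term F ar} {p : List ℕ} (ht : t.Ground) (hw : w.Ground)
    (h : t.replaceAt p w = some v) : v.Ground := by
  induction p generalizing t v with
  | nil => rw [replaceAt_nil] at h; cases h; exact hw
  | cons i p ih =>
      cases t with
      | var n => exact nomatch h
      | app f ts =>
          simp only [replaceAt] at h
          split at h
          case isTrue hlt =>
            cases hrec : (ts ⟨i, hlt⟩).replaceAt p w with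
            | none => rw [hrec] at h; exact nomatch h
            | some v' =>
                rw [hrec] at h
                cases h
                rw [ground_app]
                intro j
                by_cases hj : j = ⟨i, hlt⟩
                · subst hj; rw [Function.update_self]
                  exact ih (ground_app.1 ht _) hrec
                · rw [Function.update_of_ne hj]; exact ground_app.1 ht j
          case isFalse hlt => exact nomatch h

end Term

section LiftC

variable {F : Type} {ar : F → ℕ}

@[simp] lemma liftC_var (n : ℕ) :
    liftC (F := F) (ar := ar) (Term.var n) = Term.var n := rfl

lemma liftC_app (f : F) (ts : Fin (ar f) → Term F ar) :
    liftC (Term.app f ts) = Term.app (Sum.inl f) fun i => liftC (ts i) := rfl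

lemma circTm_app (f : F) (ts : Fin (ar f) → Term F ar) :
    circTm (Term.app f ts) = Term.app (Sum.inr f) fun i => liftC (ts i) := rfl

@[simp] lemma vars_liftC (t : Term F ar) : (liftC t).vars = t.vars := by
  induction t with
  | var n => rfl
  | app f ts ih =>
      rw [liftC_app]
      simp only [Term.vars_app]
      exact congrArg _ (funext fun i => ih i)

lemma ground_liftC {t : Term F ar} : (liftC t).Ground ↔ t.Ground := by
  simp [Term.Ground]

lemma liftC_subst (t : Term F ar) (σ : ℕ → Term F ar) :
    liftC (t.subst σ) = (liftC t).subst fun n => liftC (σ n) := by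
  induction t with
  | var n => rfl
  | app f ts ih =>
      rw [Term.subst_app, liftC_app, liftC_app, Term.subst_app]
      exact congrArg _ (funext fun i => ih i)

lemma count_liftC (t : Term F ar) (n : ℕ) : (liftC t).count n = t.count n := by
  induction t with
  | var m => rfl
  | app f ts ih =>
      rw [liftC_app]
      simp only [Term.count]
      exact Finset.sum_congr rfl fun i _ => ih i

lemma linear_liftC {t : Term F ar} (h : t.Linear) : (liftC t).Linear := by
  intro n; rw [count_liftC]; exact h n

lemma liftC_subtermAt (t : Term F ar) (p : List ℕ) :
    (liftC t).subtermAt p = (t.subtermAt p).map liftC := by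
  induction p generalizing t with
  | nil => rw [Term.subtermAt_nil, Term.subtermAt_nil]; rfl
  | cons i p ih =>
      cases t with
      | var n => rfl
      | app f ts =>
          rw [liftC_app]
          show (if h : i < ar f then _ else none) = _
          simp only [Term.subtermAt]
          split
          · exact ih _
          · rfl

lemma liftC_inj {s t : Term F ar} (h : liftC s = liftC t) : s = t := by
  induction s generalizing t with
  | var n => cases t with
    | var m => injection h with h; exact congrArg _ h
    | app g us => rw [liftC_app] at h; exact nomatch h
  | app f ts ih =>
      cases t with
      | var m => rw [liftC_app] at h; exact nomatch h
      | app g us =>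
          rw [liftC_app, liftC_app] at h
          injection h with h1 h2
          have hfg : f = g := Sum.inl_injective h1
          subst hfg
          have h2' : (fun i => liftC (ts i)) = fun i => liftC (us i) := eq_of_heq h2
          exact congrArg _ (funext fun i => ih i (congrFun h2' i))

lemma ground_circTm {t : Term F ar} (h : t.Ground) : (circTm t).Ground := by
  cases t with
  | var n => exact absurd h (Term.not_ground_var n)
  | app f ts =>
      rw [circTm_app, Term.ground_app]
      intro i
      exact ground_liftC.2 (Term.ground_app.1 h i)

end LiftC

section ReachesLemmas

variable {G : Type} {arG : G → ℕ} {Q : Type}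

lemma Reaches.mono {Γ Γ' : Set (TARule G arG Q)} (h : Γ ⊆ Γ') {t : Term G arG} {q : Q}
    (ht : Reaches Γ t q) : Reaches Γ' t q := by
  induction ht with
  | app hts hrule ih => exact Reaches.app ih (h hrule)

lemma Reaches.ground {Γ : Set (TARule G arG Q)} {t : Term G arG} {q : Q}
    (ht : Reaches Γ t q) : t.Ground := by
  induction ht with
  | app hts hrule ih => exact Term.ground_app.2 ih

lemma Reaches.output {Γ : Set (TARule G arG Q)} {t : Term G arG} {q : Q}
    (ht : Reaches Γ t q) : ∃ ρ ∈ Γ, ρ.2.2 = q := by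
  cases ht with
  | app hts hrule => exact ⟨_, hrule, rfl⟩

lemma ReachesT.mono {Γ Γ' : Set (TARule G arG Q)} (h : Γ ⊆ Γ') {θ : ℕ → Q}
    {t : Term G arG} {q : Q} (ht : ReachesT Γ θ t q) : ReachesT Γ' θ t q := by
  induction ht with
  | var n => exact ReachesT.var n
  | app hts hrule ih => exact ReachesT.app ih (h hrule)

lemma reaches_app_iff {Γ : Set (TARule G arG Q)} {f : G} {ts : Fin (arG f) → Term G arG}
    {q : Q} : Reaches Γ (Term.app f ts) q ↔
      ∃ qs : Fin (arG f) → Q, (∀ i, Reaches Γ (ts i) (qs i)) ∧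
        (⟨f, qs, q⟩ : TARule G arG Q) ∈ Γ := by
  constructor
  · intro h
    cases h with
    | app hts hrule => exact ⟨_, hts, hrule⟩
  · rintro ⟨qs, hts, hrule⟩
    exact Reaches.app hts hrule

lemma not_reaches_var {Γ : Set (TARule G arG Q)} {n : ℕ} {q : Q} :
    ¬ Reaches Γ (Term.var n) q := by
  intro h
  exact Term.not_ground_var n h.ground

lemma ReachesT.congr {Γ : Set (TARule G arG Q)} {θ θ' : ℕ → Q} {t : Term G arG} {q : Q}
    (ht : ReachesT Γ θ t q) (h : ∀ n ∈ t.vars, θ n = θ' n) : ReachesT Γ θ' t q := by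
  induction ht with
  | var n =>
      have := h n (by simp)
      rw [this]
      exact ReachesT.var n
  | @app f ts qs q hts hrule ih =>
      exact ReachesT.app (fun i => ih i fun n hn => h n (Term.mem_vars_app.2 ⟨i, hn⟩)) hrule

lemma ReachesT.substitute {Γ : Set (TARule G arG Q)} {θ : ℕ → Q} {σ : ℕ → Term G arG}
    {t : Term G arG} {q : Q} (ht : ReachesT Γ θ t q) :
    (∀ n ∈ t.vars, Reaches Γ (σ n) (θ n)) → Reaches Γ (t.subst σ) q := by
  induction ht with
  | var n => intro h; exact h n (by simp)
  | @app f ts qs q hts hrule ih =>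
      intro h
      rw [Term.subst_app]
      exact Reaches.app (fun i => ih i fun n hn => h n (Term.mem_vars_app.2 ⟨i, hn⟩)) hrule

lemma reaches_subst_decompose {Γ : Set (TARule G arG Q)} {σ : ℕ → Term G arG}
    {t : Term G arG} {q : Q} (h : Reaches Γ (t.subst σ) q) (hlin : t.Linear) :
    ∃ θ : ℕ → Q, ReachesT Γ θ t q ∧ ∀ n ∈ t.vars, Reaches Γ (σ n) (θ n) := by
  classical
  induction t generalizing q with
  | var n =>
      refine ⟨fun _ => q, ReachesT.var n, ?_⟩
      intro m hm
      simp only [Term.vars_var, Finset.mem_singleton] at hm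
      subst hm
      exact h
  | app f ts ih =>
      rw [Term.subst_app] at h
      rcases reaches_app_iff.1 h with ⟨qs, hts, hrule⟩
      have ihs := fun i => ih i (hts i) (hlin.arg i)
      choose θs h1 h2 using ihs
      refine ⟨fun n => if hn : ∃ i, n ∈ (ts i).vars then θs hn.choose n else q, ?_, ?_⟩
      · refine ReachesT.app (fun i => (h1 i).congr ?_) hrule
        intro n hn
        have hex : ∃ j, n ∈ (ts j).vars := ⟨i, hn⟩
        rw [dif_pos hex]
        have hieq : i = hex.choose := hlin.disjoint hn hex.choose_spec
        rw [← hieq]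
      · intro n hn
        rcases Term.mem_vars_app.1 hn with ⟨i, hi⟩
        have hex : ∃ j, n ∈ (ts j).vars := ⟨i, hi⟩
        simp only []
        rw [dif_pos hex]
        have hieq : i = hex.choose := hlin.disjoint hi hex.choose_spec
        rw [← hieq]
        exact h2 i n hi

end ReachesLemmas

section RewriteLemmas

variable {F : Type} {ar : F → ℕ} {R : Set (Term F ar × Term F ar)}

lemma rewrites_root {l r : Term F ar} (h : (l, r) ∈ R) (σ : ℕ → Term F ar) :
    Rewrites R (l.subst σ) (r.subst σ) :=
  ⟨[], l, r, σ, h, Term.subtermAt_nil _, Term.replaceAt_nil _ _⟩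

lemma Rewrites.arg {f : F} {ts : Fin (ar f) → Term F ar} {i : Fin (ar f)}
    {a b : Term F ar} (hab : Rewrites R a b) :
    Rewrites R (Term.app f (Function.update ts i a))
      (Term.app f (Function.update ts i b)) := by
  rcases hab with ⟨p, l, r, σ, hrule, hsub, hrep⟩
  refine ⟨i.1 :: p, l, r, σ, hrule, ?_, ?_⟩
  · simp only [Term.subtermAt]
    rw [dif_pos i.2, Fin.eta, Function.update_self]
    exact hsub
  · simp only [Term.replaceAt]
    rw [dif_pos i.2, Fin.eta, Function.update_self, hrep]
    simp [Function.update_idem]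

lemma RewritesStar.arg {f : F} {ts : Fin (ar f) → Term F ar} {i : Fin (ar f)}
    {a b : Term F ar} (h : RewritesStar R a b) :
    RewritesStar R (Term.app f (Function.update ts i a))
      (Term.app f (Function.update ts i b)) := by
  induction h with
  | refl => exact Relation.ReflTransGen.refl
  | tail _ hbc ih => exact ih.tail hbc.arg

lemma rewritesStar_app {f : F} {ts ts' : Fin (ar f) → Term F ar}
    (h : ∀ i, RewritesStar R (ts i) (ts' i)) :
    RewritesStar R (Term.app f ts) (Term.app f ts') := by
  classical
  have key : ∀ A : Finset (Fin (ar f)),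
      RewritesStar R (Term.app f ts) (Term.app f fun i => if i ∈ A then ts' i else ts i) := by
    intro A
    induction A using Finset.induction with
    | empty => exact Relation.ReflTransGen.refl
    | @insert j A hj ih =>
        refine ih.trans ?_
        set g : Fin (ar f) → Term F ar := fun i => if i ∈ A then ts' i else ts i with hg
        have hgj : g j = ts j := by simp [hg, hj]
        have h2 : RewritesStar R (Term.app f (Function.update g j (ts j)))
            (Term.app f (Function.update g j (ts' j))) := RewritesStar.arg (h j)
        have e1 : Function.update g j (ts j) = g := by
          rw [← hgj]; exact Function.update_eq_self j g
        have e2 : Function.update g j (ts' j)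
            = fun i => if i ∈ insert j A then ts' i else ts i := by
          funext i
          by_cases hij : i = j
          · subst hij; simp [Function.update_self]
          · simp [Function.update_of_ne hij, hg, hij]
        rw [e1, e2] at h2
        exact h2
  have := key Finset.univ
  simpa using this

end RewriteLemmas

section LiftTRS

variable {F : Type} {ar : F → ℕ} (R : TRS F ar)

lemma liftC_rules_iff {lr : Term (F ⊕ F) (arC ar) × Term (F ⊕ F) (arC ar)} :
    lr ∈ R.liftC.rules ↔ ∃ l r, (l, r) ∈ R.rules ∧ lr = (liftC l, liftC r) := by
  constructor
  · rintro ⟨⟨l, r⟩, hmem, rfl⟩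
    exact ⟨l, r, hmem, rfl⟩
  · rintro ⟨l, r, hmem, rfl⟩
    exact ⟨(l, r), hmem, rfl⟩

lemma liftC_leftLinear (h : R.LeftLinear) : R.liftC.LeftLinear := by
  intro lr hlr
  rcases (liftC_rules_iff R).1 hlr with ⟨l, r, hmem, rfl⟩
  exact linear_liftC (h (l, r) hmem)

lemma liftC_rightLinear (h : R.RightLinear) : R.liftC.RightLinear := by
  intro lr hlr
  rcases (liftC_rules_iff R).1 hlr with ⟨l, r, hmem, rfl⟩
  exact linear_liftC (h (l, r) hmem)

lemma liftC_lhs_app {l r : Term F ar} (h : (l, r) ∈ R.rules) :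
    ∃ (f : F) (ls : Fin (ar f) → Term F ar), l = Term.app f ls := by
  cases hl : l with
  | var n => exact absurd hl (R.lhs_not_var (l, r) h n)
  | app f ls => exact ⟨f, ls, rfl⟩

lemma liftC_growing (h : R.Growing) : R.liftC.Growing := by
  rintro lr hlr n hn1 hn2 f ts hts i hi
  rcases (liftC_rules_iff R).1 hlr with ⟨l, r, hmem, rfl⟩
  rcases liftC_lhs_app R hmem with ⟨f0, ls, rfl⟩
  simp only at hts hn1 hn2 hi ⊢
  rw [liftC_app] at hts
  cases hts
  have hvars : ∀ j : Fin (ar f0), (liftC (ls j)).vars = (ls j).vars :=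
    fun j => vars_liftC (ls j)
  have hgrow := h (Term.app f0 ls, r) hmem n (by
      rw [vars_liftC] at hn1; exact hn1) (by rw [vars_liftC] at hn2; exact hn2)
      f0 ls rfl i (by rw [vars_liftC] at hi; exact hi)
  show liftC (ls i) = _
  rw [hgrow]
  rfl

lemma liftC_subst_cancel {t u : Term F ar} {σ' : ℕ → Term (F ⊕ F) (arC ar)}
    (hlin : t.Linear) (h : liftC u = (liftC t).subst σ') :
    ∃ σ : ℕ → Term F ar, u = t.subst σ := by
  classical
  induction t generalizing u with
  | var n => exact ⟨fun _ => u, rfl⟩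
  | app f ts ih =>
      cases u with
      | var m => rw [liftC_app] at h; exact nomatch h
      | app g us =>
          rw [liftC_app, liftC_app, Term.subst_app] at h
          injection h with h1 h2
          have hfg : g = f := Sum.inl_injective h1
          subst hfg
          have h2' := eq_of_heq h2
          have harg : ∀ i, liftC (us i) = (liftC (ts i)).subst σ' :=
            fun i => congrFun h2' i
          have ihs := fun i => ih i (hlin.arg i) (harg i)
          choose σs hσ using ihs
          refine ⟨fun n => if hn : ∃ i, n ∈ (ts i).vars then σs hn.choose n else Term.var n, ?_⟩
          rw [Term.subst_app]
          refine congrArg _ (funext fun i => ?_)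
          rw [hσ i]
          refine Term.subst_congr fun n hn => ?_
          have hex : ∃ j, n ∈ (ts j).vars := ⟨i, hn⟩
          rw [dif_pos hex]
          have : i = hex.choose := hlin.disjoint hn hex.choose_spec
          rw [← this]

end LiftTRS

section BLemmas

variable {G : Type} {arG : G → ℕ} {Q : Type} {Rg : TRS G arG} {enc : Term G arG → Q}

@[simp] lemma stPattern_var (n : ℕ) :
    stPattern (Term.var (F := G) (ar := arG) n) = Term.var 0 := rfl

@[simp] lemma stPattern_app (f : G) (ts : Fin (arG f) → Term G arG) :
    stPattern (Term.app f ts) = Term.app f ts := rfl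

lemma SR.subterm {s t : Term G arG} (hs : s ∈ SR Rg) (h : ∃ p, s.subtermAt p = some t) :
    t ∈ SR Rg := by
  rcases hs with ⟨lr, hlr, f, ts, hl, i, p, hp⟩
  rcases h with ⟨q, hq⟩
  exact ⟨lr, hlr, f, ts, hl, i, p ++ q, by rw [Term.subtermAt_append, hp]; exact hq⟩

lemma SR.arg {f : G} {ts : Fin (arG f) → Term G arG} (hs : Term.app f ts ∈ SR Rg)
    (i : Fin (arG f)) : ts i ∈ SR Rg := by
  refine SR.subterm hs ⟨[i.1], ?_⟩
  simp only [Term.subtermAt]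
  rw [dif_pos i.2, Fin.eta]

lemma SR.linear (hL : Rg.LeftLinear) {s : Term G arG} (hs : s ∈ SR Rg) : s.Linear := by
  rcases hs with ⟨lr, hlr, f, ts, hl, i, p, hp⟩
  have hlhs : lr.1.Linear := hL lr hlr
  rw [hl] at hlhs
  exact Term.subterm_linear (hlhs.arg i) hp

lemma mem_BStateSet_var0 : Term.var 0 ∈ BStateSet Rg := Or.inr rfl

lemma mem_BStateSet_of_SR {s : Term G arG} (hs : s ∈ SR Rg) :
    stPattern s ∈ BStateSet Rg := Or.inl ⟨s, hs, rfl⟩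

lemma lhs_arg_mem_SR {f : G} {ls : Fin (arG f) → Term G arG} {r : Term G arG}
    (h : (Term.app f ls, r) ∈ Rg.rules) (i : Fin (arG f)) : ls i ∈ SR Rg :=
  ⟨(Term.app f ls, r), h, f, ls, rfl, i, [], Term.subtermAt_nil _⟩

lemma ground_reaches_x {Γ : Set (TARule G arG Q)} (hBP : BProp enc ⊆ Γ)
    {u : Term G arG} (hu : u.Ground) : Reaches Γ u (enc (Term.var 0)) := by
  induction u with
  | var n => exact absurd hu (Term.not_ground_var n)
  | app f ts ih =>
      exact Reaches.app (fun i => ih i (Term.ground_app.1 hu i)) (hBP ⟨f, rfl⟩)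

lemma instance_reaches {Γ : Set (TARule G arG Q)} (hBT : BTrans Rg enc ⊆ Γ)
    {t : Term G arG} (ht : t ∈ SR Rg) {σ : ℕ → Term G arG}
    (hg : (t.subst σ).Ground) : Reaches Γ (t.subst σ) (enc (stPattern t)) := by
  induction t with
  | var n =>
      exact ground_reaches_x (fun ρ hρ => hBT (Or.inr hρ)) hg
  | app f ts ih =>
      rw [Term.subst_app] at hg ⊢
      refine Reaches.app (fun i => ih i (SR.arg ht i) (Term.ground_app.1 hg i)) ?_
      exact hBT (Or.inl ⟨f, ts, ht, rfl⟩)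

lemma btrans_states {ρ : TARule G arG Q} (h : ρ ∈ BTrans Rg enc) :
    ρ.2.2 ∈ enc '' BStateSet Rg ∧ ∀ i, ρ.2.1 i ∈ enc '' BStateSet Rg := by
  rcases h with ⟨f, ts, hSR, rfl⟩ | ⟨f, rfl⟩
  · constructor
    · exact ⟨Term.app f ts, mem_BStateSet_of_SR hSR, rfl⟩
    · exact fun i => ⟨stPattern (ts i), mem_BStateSet_of_SR (SR.arg hSR i), rfl⟩
  · exact ⟨⟨Term.var 0, mem_BStateSet_var0, rfl⟩,
      fun i => ⟨Term.var 0, mem_BStateSet_var0, rfl⟩⟩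

lemma btrans_decode (hL : Rg.LeftLinear) (hinj : Set.InjOn enc (BStateSet Rg))
    {u : Term G arG} {q : Q} (h : Reaches (BTrans Rg enc) u q) :
    ∀ s ∈ BStateSet Rg, q = enc s → ∃ σ, u = s.subst σ := by
  classical
  induction h with
  | @app f ts qs q hts hrule ih =>
      intro s hs hq
      rcases hrule with ⟨g, us, hSR, heq⟩ | ⟨g, heq⟩
      · rcases Sigma.mk.inj_iff.1 heq with ⟨rfl, h2⟩
        have h3 := eq_of_heq h2
        have hqs := congrArg Prod.fst h3
        have hq2 := congrArg Prod.snd h3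
        simp only at hqs hq2
        have hmem : Term.app f us ∈ BStateSet Rg := by
          have := mem_BStateSet_of_SR hSR
          rwa [stPattern_app] at this
        have hseq : s = Term.app f us := (hinj hmem hs (hq2.symm.trans hq)).symm
        subst hseq
        have hargs : ∀ i, ∃ τ : ℕ → Term G arG, ts i = (us i).subst τ := by
          intro i
          have hqi : qs i = enc (stPattern (us i)) := congrFun hqs i
          have hpat : stPattern (us i) ∈ BStateSet Rg :=
            mem_BStateSet_of_SR (SR.arg hSR i)
          rcases ih i _ hpat hqi with ⟨τ, hτ⟩
          cases hus : us i with
          | var m =>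
              rw [hus] at hτ
              exact ⟨fun _ => ts i, by rw [Term.subst_var]⟩
          | app g' vs =>
              rw [hus, stPattern_app] at hτ
              exact ⟨τ, hτ⟩
        choose τs hτs using hargs
        have hlin : (Term.app f us).Linear := SR.linear hL hSR
        refine ⟨fun n => if hn : ∃ i, n ∈ (us i).vars then τs hn.choose n else Term.var n, ?_⟩
        rw [Term.subst_app]
        refine congrArg _ (funext fun i => ?_)
        rw [hτs i]
        refine Term.subst_congr fun n hn => ?_
        have hex : ∃ j, n ∈ (us j).vars := ⟨i, hn⟩
        rw [dif_pos hex]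
        have : i = hex.choose := hlin.disjoint hn hex.choose_spec
        rw [← this]
      · rcases Sigma.mk.inj_iff.1 heq with ⟨rfl, h2⟩
        have h3 := eq_of_heq h2
        have hq2 := congrArg Prod.snd h3
        simp only at hq2
        have hseq : s = Term.var 0 := (hinj mem_BStateSet_var0 hs (hq2.symm.trans hq)).symm
        subst hseq
        exact ⟨fun _ => Term.app f ts, rfl⟩

end BLemmas

section SatLemmas

variable {G : Type} {arG : G → ℕ} {Q : Type} (Rg : TRS G arG) (enc : Term G arG → Q)
  (Qc : Set Q) (Γ0 : Set (TARule G arG Q))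

lemma subset_satStep (Γ : Set (TARule G arG Q)) : Γ ⊆ satStep Rg enc Qc Γ :=
  Set.subset_union_left

lemma iterate_satStep_mono {m n : ℕ} (h : m ≤ n) :
    (satStep Rg enc Qc)^[m] Γ0 ⊆ (satStep Rg enc Qc)^[n] Γ0 := by
  induction n with
  | zero => cases Nat.le_zero.1 h; exact subset_rfl
  | succ n ih =>
      rcases Nat.lt_or_ge m (n + 1) with h1 | h1
      · refine subset_trans (ih (Nat.lt_succ_iff.1 h1)) ?_
        rw [Function.iterate_succ_apply']
        exact subset_satStep _ _ _ _
      · have : m = n + 1 := le_antisymm h h1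
        subst this
        exact subset_rfl

lemma iterate_subset_satGamma (n : ℕ) :
    (satStep Rg enc Qc)^[n] Γ0 ⊆ satGamma Rg enc Qc Γ0 :=
  Set.subset_iUnion (fun n => (satStep Rg enc Qc)^[n] Γ0) n

lemma Γ0_subset_satGamma : Γ0 ⊆ satGamma Rg enc Qc Γ0 :=
  iterate_subset_satGamma Rg enc Qc Γ0 0

lemma reaches_satGamma_exists {t : Term G arG} {q : Q}
    (h : Reaches (satGamma Rg enc Qc Γ0) t q) :
    ∃ n, Reaches ((satStep Rg enc Qc)^[n] Γ0) t q := by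
  induction h with
  | @app f ts qs q hts hrule ih =>
      choose ns hns using ih
      rcases Set.mem_iUnion.1 hrule with ⟨n0, hn0⟩
      classical
      refine ⟨Finset.univ.sup ns ⊔ n0, Reaches.app (qs := qs) ?_ ?_⟩
      · intro i
        exact Reaches.mono (iterate_satStep_mono Rg enc Qc Γ0
          (le_sup_of_le_left (Finset.le_sup (Finset.mem_univ i)))) (hns i)
      · exact iterate_satStep_mono Rg enc Qc Γ0 le_sup_right hn0

lemma reachesT_satGamma_exists {θ : ℕ → Q} {t : Term G arG} {q : Q}
    (h : ReachesT (satGamma Rg enc Qc Γ0) θ t q) :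
    ∃ n, ReachesT ((satStep Rg enc Qc)^[n] Γ0) θ t q := by
  induction h with
  | var n => exact ⟨0, ReachesT.var n⟩
  | @app f ts qs q hts hrule ih =>
      choose ns hns using ih
      rcases Set.mem_iUnion.1 hrule with ⟨n0, hn0⟩
      classical
      refine ⟨Finset.univ.sup ns ⊔ n0, ReachesT.app (qs := qs) ?_ ?_⟩
      · intro i
        exact ReachesT.mono (iterate_satStep_mono Rg enc Qc Γ0
          (le_sup_of_le_left (Finset.le_sup (Finset.mem_univ i)))) (hns i)
      · exact iterate_satStep_mono Rg enc Qc Γ0 le_sup_right hn0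

lemma reachesT_output {Γ : Set (TARule G arG Q)} {θ : ℕ → Q} {t : Term G arG} {q : Q}
    (h : ReachesT Γ θ t q) :
    (∃ n ∈ t.vars, q = θ n) ∨ ∃ ρ ∈ Γ, ρ.2.2 = q := by
  cases h with
  | var n => exact Or.inl ⟨n, by simp, rfl⟩
  | @app f ts qs q hts hrule => exact Or.inr ⟨⟨f, _, q⟩, hrule, rfl⟩

end SatLemmas

namespace CSetup

variable {G : Type} [Fintype G] {arG : G → ℕ} {Q : Type} [Fintype Q]
  {Rg : TRS G arG} {T : Set (Term G arG)} (C : CSetup Q Rg T)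

lemma btrans_subset_Γ0 : BTrans Rg C.enc ⊆ C.Γ0 :=
  fun _ hρ => Set.mem_union_right _ hρ

lemma bprop_subset_Γ0 : BProp C.enc ⊆ C.Γ0 :=
  fun _ hρ => Set.mem_union_right _ (Set.mem_union_right _ hρ)

lemma satArg_mem {θ : ℕ → Q} {rv : Finset ℕ} (hθ : ∀ n ∈ rv, θ n ∈ C.Qstates)
    {f : G} {ls : Fin (arG f) → Term G arG} {r0 : Term G arG}
    (hmem : (Term.app f ls, r0) ∈ Rg.rules) (i : Fin (arG f)) :
    satArg C.enc θ rv (ls i) ∈ C.Qstates := by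
  cases hls : ls i with
  | var n =>
      simp only [satArg]
      split
      · exact hθ n ‹_›
      · exact Set.mem_union_right _ ⟨Term.var 0, mem_BStateSet_var0, rfl⟩
  | app g ts =>
      simp only [satArg]
      refine Set.mem_union_right _ ⟨Term.app g ts, ?_, rfl⟩
      have h1 : Term.app g ts ∈ SR Rg := hls ▸ lhs_arg_mem_SR hmem i
      have h2 := mem_BStateSet_of_SR h1
      rwa [stPattern_app] at h2

lemma satInv (n : ℕ) :
    ∀ ρ ∈ (satStep Rg C.enc C.Qstates)^[n] C.Γ0,
      ρ.2.2 ∈ C.Qstates ∧ ∀ i, ρ.2.1 i ∈ C.Qstates := by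
  induction n with
  | zero =>
      rintro ρ (hA | hB)
      · exact ⟨Set.mem_union_left _ (C.hAstates ρ hA).1,
          fun i => Set.mem_union_left _ ((C.hAstates ρ hA).2 i)⟩
      · rcases btrans_states hB with ⟨h1, h2⟩
        exact ⟨Set.mem_union_right _ h1, fun i => Set.mem_union_right _ (h2 i)⟩
  | succ n ih =>
      rw [Function.iterate_succ_apply']
      rintro ρ (hold | ⟨f, ls, r, θ, q, hmem, hθ, hreach, rfl⟩)
      · exact ih ρ hold
      · constructor
        · rcases reachesT_output hreach with ⟨m, hm, rfl⟩ | ⟨ρ', hρ', hout⟩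
          · exact hθ m hm
          · exact hout ▸ (ih ρ' hρ').1
        · intro i
          exact C.satArg_mem hθ hmem i

lemma satGammaInv : ∀ ρ ∈ C.Γsat, ρ.2.2 ∈ C.Qstates ∧ ∀ i, ρ.2.1 i ∈ C.Qstates := by
  intro ρ hρ
  rcases Set.mem_iUnion.1 hρ with ⟨n, hn⟩
  exact C.satInv n ρ hn

lemma reaches_Γ0_split {u : Term G arG} {q : Q} (h : Reaches C.Γ0 u q) :
    (q ∈ C.QA → Reaches C.A.trans u q) ∧
    (q ∈ C.enc '' BStateSet Rg → Reaches (BTrans Rg C.enc) u q) := by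
  induction h with
  | @app f ts qs q hts hrule ih =>
      rcases hrule with hA | hB
      · have hA' : Reaches C.A.trans (Term.app f ts) q :=
          Reaches.app (fun i => (ih i).1 ((C.hAstates _ hA).2 i)) hA
        refine ⟨fun _ => hA', fun hq2 => ?_⟩
        exact (C.hshared q ⟨(C.hAstates _ hA).1, hq2⟩ _).1 hA'
      · rcases btrans_states hB with ⟨h1, h2⟩
        have hB' : Reaches (BTrans Rg C.enc) (Term.app f ts) q :=
          Reaches.app (fun i => (ih i).2 (h2 i)) hB
        exact ⟨fun hq => (C.hshared q ⟨hq, h1⟩ _).2 hB', fun _ => hB'⟩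

lemma qstates_accessible : ∀ q ∈ C.Qstates, ∃ u : Term G arG, u.Ground ∧ Reaches C.Γ0 u q := by
  rintro q (hQA | ⟨s, hs, rfl⟩)
  · rcases C.hacc q hQA with ⟨u, hu, hr⟩
    exact ⟨u, hu, hr.mono Set.subset_union_left⟩
  · rcases C.hground with ⟨w, hw⟩
    rcases hs with ⟨t, ht, rfl⟩ | hvar
    · cases t with
      | var n => exact ⟨w, hw, ground_reaches_x C.bprop_subset_Γ0 hw⟩
      | app f ts =>
          refine ⟨(Term.app f ts).subst (fun _ => w), Term.ground_subst (fun n _ => hw), ?_⟩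
          exact instance_reaches C.btrans_subset_Γ0 ht (Term.ground_subst fun n _ => hw)
    · rw [Set.mem_singleton_iff] at hvar
      subst hvar
      exact ⟨w, hw, ground_reaches_x C.bprop_subset_Γ0 hw⟩

end CSetup

section SubstRewrite

variable {F : Type} {ar : F → ℕ}

lemma Term.subst_subst (t : Term F ar) (σ τ : ℕ → Term F ar) :
    (t.subst σ).subst τ = t.subst fun n => (σ n).subst τ := by
  induction t with
  | var n => rfl
  | app f ts ih =>
      simp only [Term.subst_app]
      exact congrArg _ (funext fun i => ih i)

lemma Term.subst_ground_id {t : Term F ar} (h : t.Ground) (τ : ℕ → Term F ar) :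
    t.subst τ = t := by
  induction t with
  | var n => exact absurd h (Term.not_ground_var n)
  | app f ts ih =>
      simp only [Term.subst_app]
      exact congrArg _ (funext fun i => ih i (Term.ground_app.1 h i))

lemma Term.subtermAt_subst {t x : Term F ar} {p : List ℕ} (h : t.subtermAt p = some x)
    (τ : ℕ → Term F ar) : (t.subst τ).subtermAt p = some (x.subst τ) := by
  induction p generalizing t with
  | nil => rw [Term.subtermAt_nil] at h; cases h; exact Term.subtermAt_nil _
  | cons i p ih =>
      cases t with
      | var n =>
          exact nomatch h
      | app f ts =>
          simp only [Term.subtermAt] at h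
          split at h
          case isTrue hlt =>
            rw [Term.subst_app]
            simp only [Term.subtermAt]
            rw [dif_pos hlt]
            exact ih h
          case isFalse hlt => exact nomatch h

lemma Term.replaceAt_subst {t w v : Term F ar} {p : List ℕ}
    (h : t.replaceAt p w = some v) (τ : ℕ → Term F ar) :
    (t.subst τ).replaceAt p (w.subst τ) = some (v.subst τ) := by
  induction p generalizing t v with
  | nil => rw [Term.replaceAt_nil] at h; cases h; exact Term.replaceAt_nil _ _
  | cons i p ih =>
      cases t with
      | var n => exact nomatch h
      | app f ts =>
          simp only [Term.replaceAt] at h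
          split at h
          case isTrue hlt =>
            cases hrec : (ts ⟨i, hlt⟩).replaceAt p w with
            | none => rw [hrec] at h; exact nomatch h
            | some v' =>
                rw [hrec] at h
                cases h
                rw [Term.subst_app]
                simp only [Term.replaceAt]
                rw [dif_pos hlt, ih hrec]
                show some _ = some _
                refine congrArg _ ?_
                rw [Term.subst_app]
                refine congrArg _ (funext fun j => ?_)
                by_cases hj : j = ⟨i, hlt⟩
                · subst hj; rw [Function.update_self, Function.update_self]
                · rw [Function.update_of_ne hj, Function.update_of_ne hj]
          case isFalse hlt => exact nomatch h

lemma Rewrites.subst {R : Set (Term F ar × Term F ar)} {u v : Term F ar}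
    (h : Rewrites R u v) (τ : ℕ → Term F ar) :
    Rewrites R (u.subst τ) (v.subst τ) := by
  rcases h with ⟨p, l, r, σ, hrule, hsub, hrep⟩
  refine ⟨p, l, r, fun n => (σ n).subst τ, hrule, ?_, ?_⟩
  · have := Term.subtermAt_subst hsub τ
    rwa [Term.subst_subst] at this
  · have := Term.replaceAt_subst hrep τ
    rwa [Term.subst_subst] at this

lemma RewritesStar.subst {R : Set (Term F ar × Term F ar)} {u v : Term F ar}
    (h : RewritesStar R u v) (τ : ℕ → Term F ar) :
    RewritesStar R (u.subst τ) (v.subst τ) := by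
  induction h with
  | refl => exact Relation.ReflTransGen.refl
  | tail _ hbc ih => exact ih.tail (hbc.subst τ)

end SubstRewrite

namespace CSetup

variable {G : Type} [Fintype G] {arG : G → ℕ} {Q : Type} [Fintype Q]
  {Rg : TRS G arG} {T : Set (Term G arG)} (C : CSetup Q Rg T)

lemma bprop_subset_Γsat : BProp C.enc ⊆ C.Γsat :=
  subset_trans C.bprop_subset_Γ0 (Γ0_subset_satGamma _ _ _ _)

lemma btrans_subset_Γsat : BTrans Rg C.enc ⊆ C.Γsat :=
  subset_trans C.btrans_subset_Γ0 (Γ0_subset_satGamma _ _ _ _)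

/-- Single rewrite step, root case of the completeness argument. -/
lemma rewrite_reach_root (hRL : Rg.RightLinear)
    (hGrow : Rg.Growing) {l r : Term G arG} {σ : ℕ → Term G arG} {q : Q}
    (hrule : (l, r) ∈ Rg.rules) (hg : (l.subst σ).Ground)
    (hr : Reaches C.Γsat (r.subst σ) q) : Reaches C.Γsat (l.subst σ) q := by
  have hrl : r.Linear := hRL (l, r) hrule
  rcases reaches_subst_decompose hr hrl with ⟨θ, hθ1, hθ2⟩
  have hθQ : ∀ n ∈ r.vars, θ n ∈ C.Qstates := by
    intro n hn
    rcases (hθ2 n hn).output with ⟨ρ, hρ, hout⟩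
    exact hout ▸ (C.satGammaInv _ hρ).1
  rcases reachesT_satGamma_exists _ _ _ _ hθ1 with ⟨m, hθ1m⟩
  obtain ⟨f, ls, rfl⟩ : ∃ f ls, l = Term.app f ls := by
    cases hl : l with
    | var n => exact absurd rfl (hl ▸ Rg.lhs_not_var (l, r) hrule n)
    | app f ls => exact ⟨f, ls, rfl⟩
  have hnew : (⟨f, fun i => satArg C.enc θ r.vars (ls i), q⟩ : TARule G arG Q)
      ∈ (satStep Rg C.enc C.Qstates)^[m + 1] C.Γ0 := by
    rw [Function.iterate_succ_apply']
    exact Set.mem_union_right _ ⟨f, ls, r, θ, q, hrule, hθQ, hθ1m, rfl⟩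
  rw [Term.subst_app] at hg ⊢
  refine Reaches.app (qs := fun i => satArg C.enc θ r.vars (ls i)) ?_
    (iterate_subset_satGamma _ _ _ _ _ hnew)
  intro i
  show Reaches C.Γsat ((ls i).subst σ) (satArg C.enc θ r.vars (ls i))
  cases hls : ls i with
  | var n =>
      simp only [satArg]
      split
      case isTrue hin =>
        have := hθ2 n hin
        rw [Term.subst_var]
        exact this
      case isFalse hin =>
        rw [Term.subst_var]
        refine ground_reaches_x C.bprop_subset_Γsat ?_
        have := Term.ground_app.1 hg i
        rw [hls] at this
        rw [Term.subst_var] at this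
        exact this
  | app g ts =>
      simp only [satArg]
      have hSR : Term.app g ts ∈ SR Rg := hls ▸ lhs_arg_mem_SR hrule i
      have hgr : ((Term.app g ts).subst σ).Ground := by
        have := Term.ground_app.1 hg i
        rwa [hls] at this
      exact instance_reaches C.btrans_subset_Γsat hSR hgr

/-- Single rewrite step of the completeness argument (arbitrary position). -/
lemma rewrite_reach (hRL : Rg.RightLinear) (hGrow : Rg.Growing)
    {t t' : Term G arG} {q : Q} (hg : t.Ground) (hstep : Rewrites Rg.rules t t')
    (hr : Reaches C.Γsat t' q) : Reaches C.Γsat t q := by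
  rcases hstep with ⟨p, l, r, σ, hrule, hsub, hrep⟩
  induction p generalizing t t' q with
  | nil =>
      rw [Term.subtermAt_nil] at hsub
      cases hsub
      rw [Term.replaceAt_nil] at hrep
      cases hrep
      exact C.rewrite_reach_root hRL hGrow hrule hg hr
  | cons i p ih =>
      cases t with
      | var n => exact nomatch hsub
      | app f ts =>
          simp only [Term.subtermAt] at hsub
          simp only [Term.replaceAt] at hrep
          split at hsub
          case isFalse hlt => exact nomatch hsub
          case isTrue hlt =>
            rw [dif_pos hlt] at hrep
            cases hrec : (ts ⟨i, hlt⟩).replaceAt p (r.subst σ) with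
            | none => rw [hrec] at hrep; exact nomatch hrep
            | some v =>
                rw [hrec] at hrep
                cases hrep
                rcases reaches_app_iff.1 hr with ⟨qs, hargs, hrule'⟩
                refine reaches_app_iff.2 ⟨qs, ?_, hrule'⟩
                intro j
                by_cases hj : j = ⟨i, hlt⟩
                · subst hj
                  have h1 := hargs ⟨i, hlt⟩
                  rw [Function.update_self] at h1
                  exact ih (Term.ground_app.1 hg _) h1 hsub hrec
                · have h1 := hargs j
                  rw [Function.update_of_ne hj] at h1
                  exact h1

/-- Completeness: if a ground term rewrites (in many steps) to a term accepted by the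
saturated automaton, then it is itself accepted (same state). -/
lemma rewriteStar_reach (hRL : Rg.RightLinear) (hGrow : Rg.Growing)
    {t t' : Term G arG} {q : Q} (hg : t.Ground)
    (hstar : RewritesStar Rg.rules t t') (hr : Reaches C.Γsat t' q) :
    Reaches C.Γsat t q := by
  rcases C.hground with ⟨w, hw⟩
  have key : ∀ u u' : Term G arG, RewritesStar Rg.rules u u' → Reaches C.Γsat u' q →
      Reaches C.Γsat (u.subst fun _ => w) q := by
    intro u u' hstar
    induction hstar using Relation.ReflTransGen.head_induction_on with
    | refl =>
        intro hr'
        rw [Term.subst_ground_id hr'.ground]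
        exact hr'
    | head hab _ ih =>
        intro hr'
        have h1 := ih hr'
        refine C.rewrite_reach hRL hGrow ?_ (Rewrites.subst hab fun _ => w) h1
        exact Term.ground_subst fun n _ => hw
  have := key t t' hstar hr
  rwa [Term.subst_ground_id hg] at this

end CSetup

namespace CSetup

variable {G : Type} [Fintype G] {arG : G → ℕ} {Q : Type} [Fintype Q]
  {Rg : TRS G arG} {T : Set (Term G arG)} (C : CSetup Q Rg T)

lemma Γ0_subset_iterate (n : ℕ) :
    C.Γ0 ⊆ (satStep Rg C.enc C.Qstates)^[n] C.Γ0 := by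
  have := iterate_satStep_mono Rg C.enc C.Qstates C.Γ0 (Nat.zero_le n)
  rwa [Function.iterate_zero_apply] at this

/-- Soundness of the saturation construction, level by level. -/
lemma allDown (hL : Rg.LeftLinear) (hGrow : Rg.Growing) (n : ℕ) :
    ∀ t q, Reaches ((satStep Rg C.enc C.Qstates)^[n] C.Γ0) t q →
      ∃ t', RewritesStar Rg.rules t t' ∧ Reaches C.Γ0 t' q := by
  classical
  induction n with
  | zero =>
      intro t q h
      exact ⟨t, Relation.ReflTransGen.refl, by rwa [Function.iterate_zero_apply] at h⟩
  | succ n ih =>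
      intro t q h
      induction h with
      | @app f ts qs q hts hrule ihin =>
          choose ts' hts'1 hts'2 using ihin
          rw [Function.iterate_succ_apply'] at hrule
          rcases hrule with hold | ⟨f0, ls, r, θ, q0, hmem, hθ, hreach, heq⟩
          · -- rule already at level n
            have hreach2 : Reaches ((satStep Rg C.enc C.Qstates)^[n] C.Γ0)
                (Term.app f ts') q :=
              Reaches.app (fun i => (hts'2 i).mono (C.Γ0_subset_iterate n)) hold
            rcases ih _ _ hreach2 with ⟨t'', h1, h2⟩
            exact ⟨t'', (rewritesStar_app hts'1).trans h1, h2⟩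
          · -- new (saturated) rule
            rcases Sigma.mk.inj_iff.1 heq with ⟨rfl, h2⟩
            have h3 := eq_of_heq h2
            have hqs : qs = fun i => satArg C.enc θ r.vars (ls i) := congrArg Prod.fst h3
            have hqq : q = q0 := congrArg Prod.snd h3
            subst hqq
            have hlinl : (Term.app f ls).Linear := hL (Term.app f ls, r) hmem
            -- every argument of the new rule is an instance of the corresponding lhs argument
            have hargs : ∀ i, ∃ τ : ℕ → Term G arG, ts' i = (ls i).subst τ := by
              intro i
              have hqi : qs i = satArg C.enc θ r.vars (ls i) := congrFun hqs i
              cases hls : ls i with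
              | var m => exact ⟨fun _ => ts' i, by rw [Term.subst_var]⟩
              | app g vs =>
                  have hqi2 : qs i = C.enc (Term.app g vs) := by
                    rw [hqi, hls]; rfl
                  have hSR : Term.app g vs ∈ SR Rg := hls ▸ lhs_arg_mem_SR hmem i
                  have hBS : Term.app g vs ∈ BStateSet Rg := by
                    have := mem_BStateSet_of_SR hSR
                    rwa [stPattern_app] at this
                  have hmemenc : qs i ∈ C.enc '' BStateSet Rg := ⟨_, hBS, hqi2.symm⟩
                  have hbt : Reaches (BTrans Rg C.enc) (ts' i) (qs i) :=
                    (C.reaches_Γ0_split (hts'2 i)).2 hmemenc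
                  rcases btrans_decode hL C.henc hbt _ hBS hqi2 with ⟨τ, hτ⟩
                  exact ⟨τ, hτ⟩
            choose τs hτs using hargs
            -- ground accessibility witnesses for the states θ m
            have haccm : ∀ m : ℕ, ∃ u : Term G arG,
                m ∈ r.vars → u.Ground ∧ Reaches C.Γ0 u (θ m) := by
              intro m
              by_cases hm : m ∈ r.vars
              · rcases C.qstates_accessible (θ m) (hθ m hm) with ⟨u, hu1, hu2⟩
                exact ⟨u, fun _ => ⟨hu1, hu2⟩⟩
              · exact ⟨Term.var 0, fun hc => absurd hc hm⟩
            choose w hw using haccm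
            -- the global substitution
            set σ : ℕ → Term G arG := fun m =>
              if h2 : ∃ i, m ∈ (ls i).vars then τs h2.choose m
              else if m ∈ r.vars then w m else Term.var m with hσ
            have hsubeq : ∀ i, (ls i).subst σ = ts' i := by
              intro i
              rw [hτs i]
              refine Term.subst_congr fun m hm => ?_
              have hex : ∃ j, m ∈ (ls j).vars := ⟨i, hm⟩
              rw [hσ]
              simp only []
              rw [dif_pos hex]
              have : i = hex.choose := hlinl.disjoint hm hex.choose_spec
              rw [← this]
            have hrσ : Reaches ((satStep Rg C.enc C.Qstates)^[n] C.Γ0) (r.subst σ) q :=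
              ReachesT.substitute hreach (by
                intro m hm
                rw [hσ]
                simp only []
                by_cases hex : ∃ j, m ∈ (ls j).vars
                · rw [dif_pos hex]
                  have hlsj : ls hex.choose = Term.var m := by
                    refine hGrow (Term.app f ls, r) hmem m ?_ hm f ls rfl hex.choose hex.choose_spec
                    exact Term.mem_vars_app.2 ⟨hex.choose, hex.choose_spec⟩
                  have h4 := hτs hex.choose
                  rw [hlsj, Term.subst_var] at h4
                  rw [← h4]
                  have h5 := hts'2 hex.choose
                  have hq5 : qs hex.choose = θ m := by
                    rw [congrFun hqs hex.choose, hlsj]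
                    simp only [satArg]
                    rw [if_pos hm]
                  rw [hq5] at h5
                  exact h5.mono (C.Γ0_subset_iterate n)
                · rw [dif_neg hex, if_pos hm]
                  exact ((hw m) hm).2.mono (C.Γ0_subset_iterate n))
            rcases ih _ _ hrσ with ⟨t'', h5, h6⟩
            refine ⟨t'', ?_, h6⟩
            have step1 : RewritesStar Rg.rules (Term.app f ts) (Term.app f ts') :=
              rewritesStar_app hts'1
            have step2 : Rewrites Rg.rules (Term.app f ts') (r.subst σ) := by
              have := rewrites_root hmem σ
              rw [Term.subst_app] at this
              have heq2 : (fun i => (ls i).subst σ) = ts' := funext hsubeq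
              rwa [heq2] at this
            exact (step1.trans (Relation.ReflTransGen.single step2)).trans h5

/-- Soundness, combined over all levels. -/
lemma satDown (hL : Rg.LeftLinear) (hGrow : Rg.Growing) {t : Term G arG} {q : Q}
    (h : Reaches C.Γsat t q) :
    ∃ t', RewritesStar Rg.rules t t' ∧ Reaches C.Γ0 t' q := by
  rcases reaches_satGamma_exists _ _ _ _ h with ⟨n, hn⟩
  exact C.allDown hL hGrow n t q hn

end CSetup

section Glue

variable {G : Type} {arG : G → ℕ}

lemma glue_subst {f : G} {ls ts : Fin (arG f) → Term G arG}
    (hlin : (Term.app f ls).Linear) (h : ∀ i, ∃ σ, ts i = (ls i).subst σ) :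
    ∃ σ, Term.app f ts = (Term.app f ls).subst σ := by
  classical
  choose τs hτ using h
  refine ⟨fun n => if h2 : ∃ i, n ∈ (ls i).vars then τs h2.choose n else Term.var n, ?_⟩
  rw [Term.subst_app]
  refine congrArg _ (funext fun i => ?_)
  rw [hτ i]
  refine Term.subst_congr fun n hn => ?_
  have hex : ∃ j, n ∈ (ls j).vars := ⟨i, hn⟩
  rw [dif_pos hex]
  have : i = hex.choose := hlin.disjoint hn hex.choose_spec
  rw [← this]

lemma mem_statesOf_output {Q : Type} {Γ : Set (TARule G arG Q)} {ρ : TARule G arG Q}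
    (h : ρ ∈ Γ) : ρ.2.2 ∈ statesOf Γ := ⟨ρ, h, Or.inl rfl⟩

lemma mem_statesOf_arg {Q : Type} {Γ : Set (TARule G arG Q)} {ρ : TARule G arG Q}
    (h : ρ ∈ Γ) (i : Fin (arG ρ.1)) : ρ.2.1 i ∈ statesOf Γ := ⟨ρ, h, Or.inr ⟨i, rfl⟩⟩

end Glue

namespace CrsSetup

variable {F : Type} [Fintype F] {ar : F → ℕ} {Q : Type} [Fintype Q] {R S : TRS F ar}
  (C : CrsSetup Q R S)

lemma Γsat_subset_Γ' : C.toCSetup.Γsat ⊆ C.Γ' :=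
  fun _ h => Set.mem_union_left _ (Set.mem_union_left _ h)

lemma bmatch2_subset_Γ' : BMatch R.liftC C.enc2 ⊆ C.Γ' :=
  fun _ h => Set.mem_union_left _ (Set.mem_union_right _ h)

lemma etrans_subset_Γ' : C.Etrans ⊆ C.Γ' := fun _ h => Set.mem_union_right _ h

lemma bprop2_eq : BProp (Q := Q) C.enc2 = BProp C.enc := by
  ext ρ
  constructor
  · rintro ⟨f, rfl⟩
    exact ⟨f, by rw [C.hx]⟩
  · rintro ⟨f, rfl⟩
    exact ⟨f, by rw [C.hx]⟩

lemma btrans2_subset_Γ' : BTrans R.liftC C.enc2 ⊆ C.Γ' := by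
  rintro ρ (h | h)
  · exact C.bmatch2_subset_Γ' h
  · rw [C.bprop2_eq] at h
    exact C.Γsat_subset_Γ' (C.toCSetup.bprop_subset_Γsat h)

lemma bmatch2_output {ρ : TARule (F ⊕ F) (arC ar) Q} (h : ρ ∈ BMatch R.liftC C.enc2) :
    ρ.2.2 ∈ C.enc2 '' (BStateSet R.liftC \ {Term.var 0}) := by
  rcases h with ⟨g, us, hSR, rfl⟩
  refine ⟨Term.app g us, ⟨?_, ?_⟩, rfl⟩
  · have := mem_BStateSet_of_SR hSR
    rwa [stPattern_app] at this
  · rw [Set.mem_singleton_iff]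
    exact fun hh => nomatch hh

lemma disj_etrans_qstates {q : Q} (h1 : q ∈ statesOf C.Etrans)
    (h2 : q ∈ C.toCSetup.Qstates) : False := by
  have := C.hEfresh
  rw [Set.eq_empty_iff_forall_notMem] at this
  exact this q ⟨h1, Set.mem_union_left _ h2⟩

lemma disj_etrans_enc2 {q : Q} (h1 : q ∈ statesOf C.Etrans)
    (h2 : q ∈ C.enc2 '' (BStateSet R.liftC \ {Term.var 0})) : False := by
  have := C.hEfresh
  rw [Set.eq_empty_iff_forall_notMem] at this
  exact this q ⟨h1, Set.mem_union_right _ h2⟩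

lemma disj_enc2_qstates {q : Q} (h1 : q ∈ C.enc2 '' (BStateSet R.liftC \ {Term.var 0}))
    (h2 : q ∈ C.toCSetup.Qstates) : False := by
  have := C.hfresh2
  rw [Set.eq_empty_iff_forall_notMem] at this
  exact this q ⟨h1, h2⟩

lemma reaches_Γ'_etrans {u : Term (F ⊕ F) (arC ar)} {q : Q} (h : Reaches C.Γ' u q)
    (hq : q ∈ statesOf C.Etrans) : Reaches C.Etrans u q := by
  induction h with
  | @app f ts qs q hts hrule ih =>
      rcases hrule with (hsat | hbm) | het
      · exact absurd ((C.toCSetup.satGammaInv _ hsat).1) (fun hh => C.disj_etrans_qstates hq hh)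
      · exact absurd (C.bmatch2_output hbm) (fun hh => C.disj_etrans_enc2 hq hh)
      · exact Reaches.app (fun i => ih i (mem_statesOf_arg het i)) het

lemma reaches_Γ'_sat {u : Term (F ⊕ F) (arC ar)} {q : Q} (h : Reaches C.Γ' u q)
    (hq : q ∈ C.toCSetup.Qstates) : Reaches C.toCSetup.Γsat u q := by
  induction h with
  | @app f ts qs q hts hrule ih =>
      rcases hrule with (hsat | hbm) | het
      · exact Reaches.app (fun i => ih i ((C.toCSetup.satGammaInv _ hsat).2 i)) hsat
      · exact absurd (C.bmatch2_output hbm) (fun hh => C.disj_enc2_qstates hh hq)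
      · exact absurd (mem_statesOf_output het) (fun hh => C.disj_etrans_qstates hh hq)

lemma enc2_decode (hL : R.liftC.LeftLinear) {u : Term (F ⊕ F) (arC ar)} {q : Q}
    (h : Reaches C.Γ' u q) :
    ∀ s ∈ BStateSet R.liftC, s ≠ Term.var 0 → q = C.enc2 s → ∃ σ, u = s.subst σ := by
  classical
  induction h with
  | @app f ts qs q hts hrule ih =>
      intro s hs hsne hq
      have hqmem : q ∈ C.enc2 '' (BStateSet R.liftC \ {Term.var 0}) :=
        ⟨s, ⟨hs, by rw [Set.mem_singleton_iff]; exact hsne⟩, hq.symm⟩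
      rcases hrule with (hsat | hbm) | het
      · exact absurd ((C.toCSetup.satGammaInv _ hsat).1)
          (fun hh => C.disj_enc2_qstates hqmem hh)
      · rcases hbm with ⟨g, us, hSR, heq⟩
        rcases Sigma.mk.inj_iff.1 heq with ⟨rfl, h2⟩
        have h3 := eq_of_heq h2
        have hqs := congrArg Prod.fst h3
        have hq2 := congrArg Prod.snd h3
        simp only at hqs hq2
        have hmemB : Term.app f us ∈ BStateSet R.liftC := by
          have := mem_BStateSet_of_SR hSR
          rwa [stPattern_app] at this
        have hseq : s = Term.app f us := by
          refine (C.henc2 hmemB hs (hq2.symm.trans hq)).symm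
        subst hseq
        have hargs : ∀ i, ∃ τ : ℕ → Term (F ⊕ F) (arC ar), ts i = (us i).subst τ := by
          intro i
          have hqi : qs i = C.enc2 (stPattern (us i)) := congrFun hqs i
          cases hus : us i with
          | var m => exact ⟨fun _ => ts i, rfl⟩
          | app g' vs =>
              rw [hus, stPattern_app] at hqi
              have hSRi : Term.app g' vs ∈ SR R.liftC := hus ▸ SR.arg hSR i
              have hBSi : Term.app g' vs ∈ BStateSet R.liftC := by
                have := mem_BStateSet_of_SR hSRi
                rwa [stPattern_app] at this
              exact ih i _ hBSi (fun hh => nomatch hh) hqi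
        exact glue_subst (SR.linear hL hSR) hargs
      · exact absurd (mem_statesOf_output het) (fun hh => C.disj_etrans_enc2 hh hqmem)

lemma lhsMatch_of_redex {f : F} {ts : Fin (ar f) → Term F ar}
    (hs : (Term.app f ts).Ground) (hred : R.IsRedex (Term.app f ts)) :
    LhsMatch R.liftC C.enc2 (Sum.inl f) (fun i => dn C.Γ' (liftC (ts i))) := by
  rcases hred with ⟨⟨l, r⟩, hmem, σ, heq⟩
  obtain ⟨f0, ls0, rfl⟩ := liftC_lhs_app R hmem
  rw [Term.subst_app] at heq
  injection heq with h1 h2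
  subst h1
  have hts : ∀ i, ts i = (ls0 i).subst σ := fun i => congrFun (eq_of_heq h2) i
  have hrule : (liftC (Term.app f ls0), liftC r) ∈ R.liftC.rules :=
    (liftC_rules_iff R).2 ⟨Term.app f ls0, r, hmem, rfl⟩
  rw [liftC_app] at hrule
  refine ⟨fun i => liftC (ls0 i), liftC r, hrule, ?_⟩
  intro i
  show Reaches C.Γ' (liftC (ts i)) (C.enc2 (stPattern (liftC (ls0 i))))
  rw [hts i, liftC_subst]
  refine instance_reaches C.btrans2_subset_Γ' (lhs_arg_mem_SR hrule i) ?_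
  rw [← liftC_subst, ← hts i]
  exact ground_liftC.2 (Term.ground_app.1 hs i)

lemma redex_of_lhsMatch (hLL : R.LeftLinear) (hL : R.liftC.LeftLinear)
    {f : F} {ts : Fin (ar f) → Term F ar}
    (hmatch : LhsMatch R.liftC C.enc2 (Sum.inl f) (fun i => dn C.Γ' (liftC (ts i)))) :
    R.IsRedex (Term.app f ts) := by
  rcases hmatch with ⟨ls, r', hmem, hstates⟩
  rcases (liftC_rules_iff R).1 hmem with ⟨l, r, hmem0, heq⟩
  obtain ⟨f0, ls0, rfl⟩ := liftC_lhs_app R hmem0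
  have h1 : Term.app (Sum.inl f) ls = liftC (Term.app f0 ls0) := congrArg Prod.fst heq
  rw [liftC_app] at h1
  injection h1 with hf hls
  have hff : f = f0 := Sum.inl_injective hf
  subst hff
  have hls' : ls = fun i => liftC (ls0 i) := eq_of_heq hls
  have hrule : (Term.app (Sum.inl f) fun i => liftC (ls0 i), liftC r) ∈ R.liftC.rules := by
    have := (liftC_rules_iff R).2 ⟨Term.app f ls0, r, hmem0, rfl⟩
    rwa [liftC_app] at this
  have hlin0 : (Term.app f ls0).Linear := hLL (Term.app f ls0, r) hmem0
  have hinst : ∀ i : Fin (ar f), ∃ σ, ts i = (ls0 i).subst σ := by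
    intro i
    have hq0 : Reaches C.Γ' (liftC (ts i)) (C.enc2 (stPattern (ls i))) := hstates i
    rw [hls'] at hq0
    have hq : Reaches C.Γ' (liftC (ts i)) (C.enc2 (stPattern (liftC (ls0 i)))) := hq0
    clear hq0
    cases hl0 : ls0 i with
    | var m => exact ⟨fun _ => ts i, rfl⟩
    | app g vs =>
        rw [hl0] at hq
        have hSRi : liftC (Term.app g vs) ∈ SR R.liftC := by
          have := lhs_arg_mem_SR hrule i
          rwa [hl0] at this
        have hBSi : liftC (Term.app g vs) ∈ BStateSet R.liftC := by
          have := mem_BStateSet_of_SR hSRi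
          rw [liftC_app] at this ⊢
          rwa [stPattern_app] at this
        have hne : liftC (Term.app g vs) ≠ Term.var 0 := by
          rw [liftC_app]
          exact fun hh => nomatch hh
        have hqeq : C.enc2 (stPattern (liftC (Term.app g vs)))
            = C.enc2 (liftC (Term.app g vs)) := by
          rw [liftC_app, stPattern_app]
        rw [hqeq] at hq
        rcases C.enc2_decode hL hq (liftC (Term.app g vs)) hBSi hne rfl with ⟨σ', hσ'⟩
        exact liftC_subst_cancel (hl0 ▸ hlin0.arg i) hσ'
  rcases glue_subst hlin0 hinst with ⟨σ, hσ⟩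
  exact ⟨(Term.app f ls0, r), hmem0, σ, hσ⟩

end CrsSetup

section DStruct

variable {F : Type} {ar : F → ℕ}

lemma subtermAt_cons_iff {f : F} {ts : Fin (ar f) → Term F ar} {i : ℕ} {p : List ℕ}
    {u : Term F ar} :
    (Term.app f ts).subtermAt (i :: p) = some u ↔
      ∃ h : i < ar f, (ts ⟨i, h⟩).subtermAt p = some u := by
  simp only [Term.subtermAt]
  split
  case isTrue h => exact ⟨fun hh => ⟨h, hh⟩, fun ⟨h', hh⟩ => hh⟩
  case isFalse h =>
      exact ⟨fun hh => (nomatch hh), fun ⟨h', _⟩ => absurd h' h⟩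

lemma marked_cons_iff {f : F} {ts : Fin (ar f) → Term F ar} {i : ℕ} {p : List ℕ}
    {w v : Term (F ⊕ F) (arC ar)} (hlt : i < ar f) :
    (liftC (Term.app f ts)).replaceAt (i :: p) w = some v ↔
      ∃ v', (liftC (ts ⟨i, hlt⟩)).replaceAt p w = some v' ∧
        v = Term.app (Sum.inl f)
          (Function.update (fun j => liftC (ts j)) ⟨i, hlt⟩ v') := by
  rw [liftC_app]
  simp only [Term.replaceAt]
  split
  case isFalse h => exact absurd hlt h
  case isTrue h =>
  show Option.map _ ((liftC (ts ⟨i, hlt⟩)).replaceAt p w) = some v ↔ _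
  cases hrec : (liftC (ts ⟨i, hlt⟩)).replaceAt p w with
  | none =>
      constructor
      · intro hh; exact nomatch hh
      · rintro ⟨v', hv', rfl⟩; exact nomatch hv'
  | some v'' =>
      constructor
      · intro hh
        cases hh
        exact ⟨v'', rfl, rfl⟩
      · rintro ⟨v', hv', rfl⟩
        cases hv'
        rfl

lemma dn_app {G : Type} {arG : G → ℕ} {Q : Type} {Γ : Set (TARule G arG Q)} {g : G}
    {us : Fin (arG g) → Term G arG} :
    dn Γ (Term.app g us) = oneStep Γ g (fun i => dn Γ (us i)) := by
  ext q
  exact reaches_app_iff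

lemma dn_liftC_app {Q : Type} {Γ : Set (TARule (F ⊕ F) (arC ar) Q)} {f : F}
    {ts : Fin (ar f) → Term F ar} :
    dn Γ (liftC (Term.app f ts)) = oneStep Γ (Sum.inl f) (fun i => dn Γ (liftC (ts i))) := by
  rw [liftC_app]
  exact dn_app

lemma dn_circ_app {Q : Type} {Γ : Set (TARule (F ⊕ F) (arC ar) Q)} {f : F}
    {ts : Fin (ar f) → Term F ar} :
    dn Γ (circTm (Term.app f ts)) = oneStep Γ (Sum.inr f) (fun i => dn Γ (liftC (ts i))) := by
  rw [circTm_app]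
  exact dn_app

lemma oneStep_mono {G : Type} {arG : G → ℕ} {Q : Type} {Γ : Set (TARule G arG Q)} {g : G}
    {Ss Ss' : Fin (arG g) → Set Q} (h : ∀ i, Ss i ⊆ Ss' i) :
    oneStep Γ g Ss ⊆ oneStep Γ g Ss' := by
  rintro q ⟨qs, hqs, hrule⟩
  exact ⟨qs, fun i => h i (hqs i), hrule⟩

/-- `v` is `s` with the redex at position `p` replaced by its marked version. -/
def MarkedAt (R : TRS F ar) (s : Term F ar) (p : List ℕ)
    (v : Term (F ⊕ F) (arC ar)) : Prop :=
  ∃ u, s.subtermAt p = some u ∧ R.IsRedex u ∧ (liftC s).replaceAt p (circTm u) = some v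

end DStruct

namespace CrsSetup

variable {F : Type} [Fintype F] {ar : F → ℕ} {Q : Type} [Fintype Q] {R S : TRS F ar}
  (C : CrsSetup Q R S)

/-- The invariant characterizing the second components of states of `𝒟'(ℛ,𝒮)`. -/
def GoodP (s : Term F ar) (P : Set Q) : Prop :=
  (∀ q ∈ P, ∃ p v, MarkedAt R s p v ∧ Reaches C.Γ' v q) ∧
  (∀ p u, s.subtermAt p = some u → R.IsRedex u →
    ∃ v q, MarkedAt R s p v ∧ q ∈ P ∧ Reaches C.Γ' v q)

end CrsSetup

namespace CrsSetup

variable {F : Type} [Fintype F] {ar : F → ℕ} {Q : Type} [Fintype Q] {R S : TRS F ar}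
  (C : CrsSetup Q R S)

set_option maxHeartbeats 2000000 in
/-- Characterization of reachability in the automaton `𝒟'(ℛ,𝒮)`. -/
lemma dreach_iff (hLL : R.LeftLinear) (hL : R.liftC.LeftLinear) (s : Term F ar) :
    s.Ground → ∀ SP : Set Q × Set Q,
      Reaches (DTransRS R.liftC C.Γ' C.enc2) s SP ↔
        (SP.1 = dn C.Γ' (liftC s) ∧ C.GoodP s SP.2) := by
  classical
  induction s with
  | var n => intro hg; exact absurd hg (Term.not_ground_var n)
  | app f ts ih =>
    intro hg SP
    have hgi : ∀ i, (ts i).Ground := Term.ground_app.1 hg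
    constructor
    · intro h
      rcases reaches_app_iff.1 h with ⟨SPs, hargs, hrule⟩
      rcases hrule with ⟨f', SPf, P1, P2, hP1sub, hP1cov, hP2, heqρ⟩
      rcases Sigma.mk.inj_iff.1 heqρ with ⟨rfl, h2⟩
      have h3 := eq_of_heq h2
      have hSPs : SPs = SPf := congrArg Prod.fst h3
      subst hSPs
      have hSP : SP = (oneStep C.Γ' (Sum.inl f) fun i => (SPs i).1, P1 ∪ P2) :=
        congrArg Prod.snd h3
      have ihs : ∀ i, (SPs i).1 = dn C.Γ' (liftC (ts i)) ∧ C.GoodP (ts i) (SPs i).2 :=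
        fun i => (ih i (hgi i) (SPs i)).1 (hargs i)
      have hdn : ∀ j q', q' ∈ (SPs j).1 → Reaches C.Γ' (liftC (ts j)) q' := by
        intro j q' hq'
        rw [(ihs j).1] at hq'
        exact hq'
      have hdnr : ∀ j q', Reaches C.Γ' (liftC (ts j)) q' → q' ∈ (SPs j).1 := by
        intro j q' hq'
        rw [(ihs j).1]
        exact hq'
      have hLMiff : LhsMatch R.liftC C.enc2 (Sum.inl f) (fun i => (SPs i).1) ↔
          LhsMatch R.liftC C.enc2 (Sum.inl f) (fun i => dn C.Γ' (liftC (ts i))) := by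
        constructor
        · rintro ⟨ls, r, hm, hst⟩
          exact ⟨ls, r, hm, fun i => hdn i _ (hst i)⟩
        · rintro ⟨ls, r, hm, hst⟩
          exact ⟨ls, r, hm, fun i => hdnr i _ (hst i)⟩
      subst hSP
      refine ⟨?_, ?_, ?_⟩
      · show oneStep _ _ _ = _
        rw [dn_liftC_app]
        exact congrArg _ (funext fun i => (ihs i).1)
      · rintro q (hq | hq)
        · rcases Set.mem_iUnion.1 (hP1sub hq) with ⟨i, hq2⟩
          rcases hq2 with ⟨qsf, hqsf, hrule2⟩
          have hqi : qsf i ∈ (SPs i).2 := by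
            have h9 : qsf i ∈ if i = i then (SPs i).2 else (SPs i).1 := hqsf i
            rwa [if_pos rfl] at h9
          rcases (ihs i).2.1 (qsf i) hqi with ⟨p, v', ⟨u, hu1, hu2, hu3⟩, hv'⟩
          refine ⟨i.1 :: p,
            Term.app (Sum.inl f) (Function.update (fun j => liftC (ts j)) i v'),
            ⟨u, ?_, hu2, ?_⟩, ?_⟩
          · exact subtermAt_cons_iff.2 ⟨i.2, by rw [Fin.eta]; exact hu1⟩
          · exact (marked_cons_iff i.2).2 ⟨v', by rw [Fin.eta]; exact hu3, by rw [Fin.eta]⟩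
          · refine reaches_app_iff.2 ⟨qsf, ?_, hrule2⟩
            intro j
            by_cases hj : j = i
            · subst hj
              rw [Function.update_self]
              exact hv'
            · rw [Function.update_of_ne hj]
              have h5 : qsf j ∈ if j = i then (SPs j).2 else (SPs j).1 := hqsf j
              rw [if_neg hj] at h5
              exact hdn j _ h5
        · rcases hP2 with ⟨hLM, hP2ne, hP2sub⟩ | ⟨hnLM, hP2e⟩
          · rcases hP2sub hq with ⟨qsf, hqsf, hrule2⟩
            have hred : R.IsRedex (Term.app f ts) :=
              C.redex_of_lhsMatch hLL hL (hLMiff.1 hLM)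
            refine ⟨[], circTm (Term.app f ts),
              ⟨Term.app f ts, Term.subtermAt_nil _, hred, Term.replaceAt_nil _ _⟩, ?_⟩
            rw [circTm_app]
            exact reaches_app_iff.2 ⟨qsf, fun i => hdn i _ (hqsf i), hrule2⟩
          · rw [hP2e] at hq
            exact absurd hq (Set.notMem_empty q)
      · intro p u hsub hred
        cases p with
        | nil =>
            rw [Term.subtermAt_nil] at hsub
            cases hsub
            have hLM : LhsMatch R.liftC C.enc2 (Sum.inl f) (fun i => (SPs i).1) :=
              hLMiff.2 (C.lhsMatch_of_redex hg hred)
            rcases hP2 with ⟨hLM2, hP2ne, hP2sub⟩ | ⟨hnLM, hP2e⟩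
            · rcases hP2ne with ⟨q, hq⟩
              refine ⟨circTm (Term.app f ts), q,
                ⟨Term.app f ts, Term.subtermAt_nil _, hred, Term.replaceAt_nil _ _⟩,
                Or.inr hq, ?_⟩
              rcases hP2sub hq with ⟨qsf, hqsf, hrule2⟩
              rw [circTm_app]
              exact reaches_app_iff.2 ⟨qsf, fun i => hdn i _ (hqsf i), hrule2⟩
            · exact absurd hLM hnLM
        | cons i0 p' =>
            rcases subtermAt_cons_iff.1 hsub with ⟨hlt, hsub'⟩
            rcases (ihs ⟨i0, hlt⟩).2.2 p' u hsub' hred with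
              ⟨v', q', ⟨u', hu1, hu2, hu3⟩, hq'm, hv'q'⟩
            have huu : u' = u := Option.some.inj (hu1.symm.trans hsub')
            subst huu
            rcases hP1cov ⟨i0, hlt⟩ q' hq'm with ⟨q'', hq''P1, hq''os⟩
            rcases hq''os with ⟨qsf, hqsf, hrule2⟩
            refine ⟨Term.app (Sum.inl f)
                (Function.update (fun j => liftC (ts j)) ⟨i0, hlt⟩ v'), q'',
              ⟨u', hsub, hred, (marked_cons_iff hlt).2 ⟨v', hu3, rfl⟩⟩,
              Or.inl hq''P1, ?_⟩
            refine reaches_app_iff.2 ⟨qsf, ?_, hrule2⟩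
            intro j
            have h5 : qsf j ∈ if j = (⟨i0, hlt⟩ : Fin (ar f)) then {q'} else (SPs j).1 :=
              hqsf j
            by_cases hj : j = ⟨i0, hlt⟩
            · rw [if_pos hj, Set.mem_singleton_iff] at h5
              rw [hj, Function.update_self, ← hj, h5]
              exact hv'q'
            · rw [if_neg hj] at h5
              rw [Function.update_of_ne hj]
              exact hdn j _ h5
    · intro hyp
      obtain ⟨S0, P⟩ := SP
      obtain ⟨hS1, hGa, hGb⟩ := hyp
      have hS1' : S0 = dn C.Γ' (liftC (Term.app f ts)) := hS1
      subst hS1'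
      have hdecomp : ∀ (i0 : ℕ) (p' : List ℕ) (v : Term (F ⊕ F) (arC ar)) (q : Q),
          MarkedAt R (Term.app f ts) (i0 :: p') v → Reaches C.Γ' v q →
          ∃ (hlt : i0 < ar f) (v' : Term (F ⊕ F) (arC ar)) (qsf : Fin (ar f) → Q),
            MarkedAt R (ts ⟨i0, hlt⟩) p' v' ∧
            Reaches C.Γ' v' (qsf ⟨i0, hlt⟩) ∧
            (∀ j, j ≠ ⟨i0, hlt⟩ → Reaches C.Γ' (liftC (ts j)) (qsf j)) ∧
            (⟨Sum.inl f, qsf, q⟩ : TARule (F ⊕ F) (arC ar) Q) ∈ C.Γ' := by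
        rintro i0 p' v q ⟨u, hu1, hu2, hu3⟩ hvq
        rcases subtermAt_cons_iff.1 hu1 with ⟨hlt, hsub'⟩
        rcases (marked_cons_iff hlt).1 hu3 with ⟨v', hv'1, rfl⟩
        rcases reaches_app_iff.1 hvq with ⟨qsf, hqsf, hrule2⟩
        refine ⟨hlt, v', qsf, ⟨u, hsub', hu2, hv'1⟩, ?_, ?_, hrule2⟩
        · have h5 := hqsf ⟨i0, hlt⟩
          rwa [Function.update_self] at h5
        · intro j hj
          have h5 := hqsf j
          rwa [Function.update_of_ne hj] at h5
      set Pi : Fin (ar f) → Set Q := fun i =>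
        { r | (∃ p' v', MarkedAt R (ts i) p' v' ∧ Reaches C.Γ' v' r) ∧
              ∃ q ∈ P, q ∈ oneStep C.Γ' (Sum.inl f)
                (fun j => if j = i then {r} else dn C.Γ' (liftC (ts j))) } with hPi
      have hPimem : ∀ (i : Fin (ar f)) (r : Q),
          (∃ p' v', MarkedAt R (ts i) p' v' ∧ Reaches C.Γ' v' r) →
          (∃ q ∈ P, q ∈ oneStep C.Γ' (Sum.inl f)
            (fun j => if j = i then {r} else dn C.Γ' (liftC (ts j)))) → r ∈ Pi i :=
        fun i r h1 h2 => ⟨h1, h2⟩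
      -- membership of a decomposed marked-term state in `Pi`
      have hkey : ∀ q ∈ P, ∀ (i0 : ℕ) (p' : List ℕ) (v : Term (F ⊕ F) (arC ar)),
          MarkedAt R (Term.app f ts) (i0 :: p') v → Reaches C.Γ' v q →
          q ∈ ⋃ i, oneStep C.Γ' (Sum.inl f)
            (fun j => if j = i then Pi j else dn C.Γ' (liftC (ts j))) := by
        intro q hq i0 p' v hmk hvq
        rcases hdecomp i0 p' v q hmk hvq with ⟨hlt, v', qsf, hmk', hrv', hdns, hrule2⟩
        have hmemPi : qsf ⟨i0, hlt⟩ ∈ Pi ⟨i0, hlt⟩ := by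
          refine hPimem _ _ ⟨p', v', hmk', hrv'⟩ ⟨q, hq, qsf, ?_, hrule2⟩
          intro j'
          show qsf j' ∈ if j' = (⟨i0, hlt⟩ : Fin (ar f)) then {qsf ⟨i0, hlt⟩}
            else dn C.Γ' (liftC (ts j'))
          by_cases hj' : j' = ⟨i0, hlt⟩
          · rw [if_pos hj']
            exact Set.mem_singleton_iff.2 (congrArg qsf hj')
          · rw [if_neg hj']
            exact hdns j' hj'
        refine Set.mem_iUnion.2 ⟨⟨i0, hlt⟩, qsf, ?_, hrule2⟩
        intro j
        show qsf j ∈ if j = (⟨i0, hlt⟩ : Fin (ar f)) then Pi j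
          else dn C.Γ' (liftC (ts j))
        by_cases hj : j = ⟨i0, hlt⟩
        · rw [if_pos hj]
          rw [hj]
          exact hmemPi
        · rw [if_neg hj]
          exact hdns j hj
      have hGoodPi : ∀ i, C.GoodP (ts i) (Pi i) := by
        intro i
        constructor
        · intro r hr
          exact hr.1
        · intro p' u hsub' hred'
          have hsubs : (Term.app f ts).subtermAt (i.1 :: p') = some u :=
            subtermAt_cons_iff.2 ⟨i.2, by rw [Fin.eta]; exact hsub'⟩
          rcases hGb _ u hsubs hred' with ⟨v, q, hmk, hqP, hvq⟩
          rcases hdecomp i.1 p' v q hmk hvq with ⟨hlt, v', qsf, hmk', hrv', hdns, hrule2⟩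
          have heta : (⟨i.1, hlt⟩ : Fin (ar f)) = i := Fin.eta i hlt
          rw [heta] at hmk' hrv'
          refine ⟨v', qsf i, hmk', ?_, hrv'⟩
          refine hPimem _ _ ⟨p', v', hmk', hrv'⟩ ⟨q, hqP, qsf, ?_, hrule2⟩
          intro j'
          show qsf j' ∈ if j' = i then {qsf i} else dn C.Γ' (liftC (ts j'))
          by_cases hj' : j' = i
          · rw [if_pos hj']
            exact Set.mem_singleton_iff.2 (congrArg qsf hj')
          · rw [if_neg hj']
            refine hdns j' ?_
            rw [heta]
            exact hj'
      have hargreach : ∀ i, Reaches (DTransRS R.liftC C.Γ' C.enc2) (ts i)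
          (dn C.Γ' (liftC (ts i)), Pi i) :=
        fun i => (ih i (hgi i) _).2 ⟨rfl, hGoodPi i⟩
      set P1 : Set Q := P ∩ ⋃ i, oneStep C.Γ' (Sum.inl f)
        (fun j => if j = i then Pi j else dn C.Γ' (liftC (ts j))) with hP1def
      have hP1cov' : ∀ (i : Fin (ar f)), ∀ r ∈ Pi i,
          (P1 ∩ oneStep C.Γ' (Sum.inl f)
            (fun j => if j = i then {r} else dn C.Γ' (liftC (ts j)))).Nonempty := by
        intro i r hr
        rcases hr.2 with ⟨q, hqP, hqos⟩
        refine ⟨q, ⟨hqP, Set.mem_iUnion.2 ⟨i, ?_⟩⟩, hqos⟩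
        refine oneStep_mono (fun j => ?_) hqos
        show (if j = i then ({r} : Set Q) else dn C.Γ' (liftC (ts j))) ⊆
          (if j = i then Pi j else dn C.Γ' (liftC (ts j)))
        by_cases hj : j = i
        · rw [if_pos hj, if_pos hj]
          intro x hx
          rw [Set.mem_singleton_iff] at hx
          rw [hx, hj]
          exact hr
        · rw [if_neg hj, if_neg hj]
      by_cases hLM : LhsMatch R.liftC C.enc2 (Sum.inl f) (fun i => dn C.Γ' (liftC (ts i)))
      · set P2 : Set Q := P ∩ dn C.Γ' (circTm (Term.app f ts)) with hP2def
        have hPeq : P1 ∪ P2 = P := by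
          apply Set.Subset.antisymm
          · exact Set.union_subset Set.inter_subset_left Set.inter_subset_left
          · intro q hq
            rcases hGa q hq with ⟨p, v, hmk, hvq⟩
            cases p with
            | nil =>
                rcases hmk with ⟨u, hu1, hu2, hu3⟩
                rw [Term.subtermAt_nil] at hu1
                cases hu1
                rw [Term.replaceAt_nil] at hu3
                cases hu3
                exact Or.inr ⟨hq, hvq⟩
            | cons i0 p' => exact Or.inl ⟨hq, hkey q hq i0 p' v hmk hvq⟩
        have hrulemem : (⟨f, fun i => (dn C.Γ' (liftC (ts i)), Pi i),
            (dn C.Γ' (liftC (Term.app f ts)), P)⟩ :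
              TARule F ar (Set Q × Set Q)) ∈ DTransRS R.liftC C.Γ' C.enc2 := by
          refine ⟨f, fun i => (dn C.Γ' (liftC (ts i)), Pi i), P1, P2,
            Set.inter_subset_right, hP1cov', Or.inl ⟨hLM, ?_, ?_⟩, ?_⟩
          · have hred : R.IsRedex (Term.app f ts) := C.redex_of_lhsMatch hLL hL hLM
            rcases hGb [] (Term.app f ts) (Term.subtermAt_nil _) hred with
              ⟨v, q, ⟨u, hu1, hu2, hu3⟩, hqP, hvq⟩
            rw [Term.subtermAt_nil] at hu1
            cases hu1
            rw [Term.replaceAt_nil] at hu3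
            cases hu3
            exact ⟨q, hqP, hvq⟩
          · refine subset_trans Set.inter_subset_right ?_
            rw [dn_circ_app]
          · rw [dn_liftC_app, ← hPeq]
        exact Reaches.app hargreach hrulemem
      · have hPeq : P1 ∪ (∅ : Set Q) = P := by
          rw [Set.union_empty]
          apply Set.Subset.antisymm Set.inter_subset_left
          intro q hq
          rcases hGa q hq with ⟨p, v, hmk, hvq⟩
          cases p with
          | nil =>
              exfalso
              rcases hmk with ⟨u, hu1, hu2, hu3⟩
              rw [Term.subtermAt_nil] at hu1
              cases hu1
              exact hLM (C.lhsMatch_of_redex hg hu2)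
          | cons i0 p' => exact ⟨hq, hkey q hq i0 p' v hmk hvq⟩
        have hrulemem : (⟨f, fun i => (dn C.Γ' (liftC (ts i)), Pi i),
            (dn C.Γ' (liftC (Term.app f ts)), P)⟩ :
              TARule F ar (Set Q × Set Q)) ∈ DTransRS R.liftC C.Γ' C.enc2 := by
          refine ⟨f, fun i => (dn C.Γ' (liftC (ts i)), Pi i), P1, ∅,
            Set.inter_subset_right, hP1cov', Or.inr ⟨hLM, rfl⟩, ?_⟩
          rw [dn_liftC_app, ← hPeq]
        exact Reaches.app hargreach hrulemem

end CrsSetup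

end Aux

/-- Let `ℛ` and `𝒮` be linear growing TRSs over `𝓕` and `𝒟'(ℛ,𝒮)`
the powerset-pair automaton built from `𝒞'_{RS_{𝒮°}}(ℛ)`.  For every `s ∈ 𝒯(𝓕)`:
`s ∈ L(𝒟'(ℛ,𝒮))` iff `s` is not root-stable with respect to `𝒮` and
`s[(s|_p)°]_p ∈ (→_ℛ*)[RS_{𝒮°}]` for every redex position `p` of `s`. -/
theorem statement19 {F : Type} [Fintype F] {ar : F → ℕ} {Q : Type} [Fintype Q]
    (R S : TRS F ar) (hRlin : R.IsLinear) (hRgrow : R.Growing)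
    (hSlin : S.IsLinear) (hSgrow : S.Growing)
    (C : CrsSetup Q R S)
    (s : Term F ar) (hs : s.Ground) :
    s ∈ Lang (DAutomatonRS R.liftC C.Γ' C.enc2 C.Qf' C.A.final) ↔
      (¬ S.RootStable s ∧ ∀ p u, s.subtermAt p = some u → R.IsRedex u →
        ∃ v, (liftC s).replaceAt p (circTm u) = some v ∧
          ∃ t ∈ TRS.RSset S.circ, RewritesStar R.liftC.rules v t) := by
  classical
  have hL : R.liftC.LeftLinear := liftC_leftLinear R hRlin.1
  have hRL : R.liftC.RightLinear := liftC_rightLinear R hRlin.2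
  have hGrow : R.liftC.Growing := liftC_growing R hRgrow
  constructor
  · rintro ⟨hg, SP, hfin, hreach⟩
    rcases (C.dreach_iff hRlin.1 hL s hs SP).1 hreach with ⟨hS1, hGa, hGb⟩
    obtain ⟨hfin1, hfin2⟩ := hfin
    constructor
    · rcases hfin1 with ⟨q0, hq0S, hq0f⟩
      rw [hS1] at hq0S
      have hq0states : q0 ∈ statesOf C.Etrans := C.hQf' hq0f
      have hE1 : Reaches C.Etrans (liftC s) q0 := C.reaches_Γ'_etrans hq0S hq0states
      rcases (C.hE (liftC s)).1 ⟨ground_liftC.2 hs, q0, hq0f, hE1⟩ with ⟨s', heq, hg', hnrs⟩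
      rw [liftC_inj heq]
      exact hnrs
    · intro p u hsub hred
      rcases hGb p u hsub hred with ⟨v, q, ⟨u', hu1, hu2, hu3⟩, hqP, hvq⟩
      have huu : u' = u := Option.some.inj (hu1.symm.trans hsub)
      subst huu
      refine ⟨v, hu3, ?_⟩
      have hqQA : q ∈ C.QA := C.hfinal (hfin2 hqP)
      have hsat : Reaches C.toCSetup.Γsat v q :=
        C.reaches_Γ'_sat hvq (Set.mem_union_left _ hqQA)
      rcases C.toCSetup.satDown hL hGrow hsat with ⟨t', hstar, hΓ0⟩
      have hA : Reaches C.A.trans t' q := (C.toCSetup.reaches_Γ0_split hΓ0).1 hqQA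
      refine ⟨t', ?_, hstar⟩
      rw [C.hT]
      exact ⟨hΓ0.ground, q, hfin2 hqP, hA⟩
  · rintro ⟨hnrs, hcov⟩
    set P : Set Q := { q | q ∈ C.A.final ∧
      ∃ p v, MarkedAt R s p v ∧ Reaches C.Γ' v q } with hPdef
    have hGood : C.GoodP s P := by
      constructor
      · intro q hq
        exact hq.2
      · intro p u hsub hred
        rcases hcov p u hsub hred with ⟨v, hrep, t, htRS, hstar⟩
        rw [C.hT] at htRS
        rcases htRS with ⟨htg, qf, hqf, hA⟩
        have hvground : v.Ground :=
          Term.replaceAt_ground (ground_liftC.2 hs)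
            (ground_circTm (Term.subterm_ground hs hsub)) hrep
        have hsat : Reaches C.toCSetup.Γsat v qf :=
          C.toCSetup.rewriteStar_reach hRL hGrow hvground hstar
            (hA.mono fun ρ hρ =>
              Γ0_subset_satGamma _ _ _ _ (Set.mem_union_left _ hρ))
        have hvq : Reaches C.Γ' v qf := hsat.mono C.Γsat_subset_Γ'
        exact ⟨v, qf, ⟨u, hsub, hred, hrep⟩,
          ⟨hqf, p, v, ⟨u, hsub, hred, hrep⟩, hvq⟩, hvq⟩
    have hfin1 : (dn C.Γ' (liftC s) ∩ C.Qf').Nonempty := by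
      rcases (C.hE (liftC s)).2 ⟨s, rfl, hs, hnrs⟩ with ⟨hg2, q, hqf, hre⟩
      exact ⟨q, hre.mono C.etrans_subset_Γ', hqf⟩
    refine ⟨hs, (dn C.Γ' (liftC s), P), ⟨hfin1, fun q hq => hq.1⟩, ?_⟩
    exact (C.dreach_iff hRlin.1 hL s hs _).2 ⟨rfl, hGood⟩
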